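/- arXiv:math/0512460 — 4 statements merged into one kernel-verified Lean document; each statement's English description precedes it below -/
import Mathlib

section
/- Let u be a non-negative subharmonic function defined on an open connected set D ⊆ ℂ and let p > 0. Then there exists a constant C_p depending only on p such that for every z ∈ D and every r > 0 with the closed disc B̄(z,r) ⊆ D, one has u(z)^p ≤ C_p · (1/|B(z,r)|) ∫_{B(z,r)} u(y)^p dy, where |B(z,r)| = πr² is the area of the disc and the integral is with respect to two-dimensional Lebesgue measure. -/
open Set Filter Metric MeasureTheory

noncomputable section

/-- A function `u` is subharmonic on `D ⊆ ℂ` if it is upper semicontinuous on `D` and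
satisfies the sub-mean value inequality on every closed disc contained in `D`. -/
def IsSubharmonicOn (u : ℂ → ℝ) (D : Set ℂ) : Prop :=
  UpperSemicontinuousOn u D ∧
    ∀ (z : ℂ) (ρ : ℝ), 0 < ρ → closedBall z ρ ⊆ D →
      u z ≤ (1 / (2 * Real.pi)) *
        ∫ φ in (0:ℝ)..(2 * Real.pi), u (z + (ρ : ℂ) * Complex.exp ((φ : ℂ) * Complex.I))

open Real

set_option maxHeartbeats 1000000

lemma usc_isOpen_lt {u : ℂ → ℝ} {D : Set ℂ} (hD : IsOpen D)
    (h : UpperSemicontinuousOn u D) (a : ℝ) : IsOpen {x | x ∈ D ∧ u x < a} := by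
  rw [isOpen_iff_mem_nhds]
  rintro x ⟨hxD, hxa⟩
  have h1 := h x hxD a hxa
  rw [nhdsWithin_eq_nhds.2 (hD.mem_nhds hxD)] at h1
  filter_upwards [h1, hD.mem_nhds hxD] with y hy1 hy2
  exact ⟨hy2, hy1⟩

lemma usc_measurable_indicator {u : ℂ → ℝ} {D : Set ℂ} (hD : IsOpen D)
    (h : UpperSemicontinuousOn u D) : Measurable (D.indicator u) := by
  apply measurable_of_Iio
  intro a
  by_cases ha : 0 < a
  · have : D.indicator u ⁻¹' Iio a = {x | x ∈ D ∧ u x < a} ∪ Dᶜ := by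
      ext x
      by_cases hx : x ∈ D <;> simp [Set.indicator_apply, hx, ha]
    rw [this]
    exact ((usc_isOpen_lt hD h a).measurableSet).union hD.measurableSet.compl
  · have : D.indicator u ⁻¹' Iio a = {x | x ∈ D ∧ u x < a} := by
      ext x
      by_cases hx : x ∈ D <;> simp [Set.indicator_apply, hx, ha]
    rw [this]
    exact (usc_isOpen_lt hD h a).measurableSet

lemma usc_bddAbove {u : ℂ → ℝ} {D : Set ℂ} (hD : IsOpen D)
    (h : UpperSemicontinuousOn u D) {K : Set ℂ} (hK : IsCompact K) (hKD : K ⊆ D) :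
    ∃ M : ℝ, 0 ≤ M ∧ ∀ x ∈ K, u x ≤ M := by
  have hcover : K ⊆ ⋃ n : ℕ, {x | x ∈ D ∧ u x < n} := by
    intro x hx
    obtain ⟨n, hn⟩ := exists_nat_gt (u x)
    exact mem_iUnion.2 ⟨n, hKD hx, hn⟩
  obtain ⟨t, ht⟩ := hK.elim_finite_subcover _ (fun n : ℕ => usc_isOpen_lt hD h n) hcover
  refine ⟨(t.sup id : ℕ), Nat.cast_nonneg _, fun x hx => ?_⟩
  obtain ⟨n, hn, hxn⟩ := mem_iUnion₂.1 (ht hx)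
  calc u x ≤ (n : ℝ) := hxn.2.le
  _ ≤ ((t.sup id : ℕ) : ℝ) := by exact_mod_cast Finset.le_sup (f := id) hn

/-- Area sub-mean value inequality, with the measurable extension `D.indicator u`. -/
lemma area_submean {u : ℂ → ℝ} {D : Set ℂ} (hD : IsOpen D)
    (hsub : IsSubharmonicOn u D) (hpos : ∀ z ∈ D, 0 ≤ u z)
    {z₀ : ℂ} {ρ : ℝ} (hρ : 0 < ρ) (hB : closedBall z₀ ρ ⊆ D) :
    Real.pi * ρ ^ 2 * u z₀ ≤ ∫ y in ball z₀ ρ, D.indicator u y := by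
  set g : ℂ → ℝ := D.indicator u with hgdef
  have hg : Measurable g := usc_measurable_indicator hD hsub.1
  have hg0 : ∀ x, 0 ≤ g x := fun x => Set.indicator_nonneg (fun y hy => hpos y hy) x
  have hgeq : ∀ x ∈ D, g x = u x := fun x hx => Set.indicator_of_mem hx u
  obtain ⟨M, hM0, hM⟩ := usc_bddAbove hD hsub.1 (isCompact_closedBall z₀ ρ) hB
  have hgM : ∀ x ∈ closedBall z₀ ρ, g x ≤ M := fun x hx => by
    rw [hgeq x (hB hx)]; exact hM x hx
  -- the shifted indicator function
  set f : ℂ → ℝ := fun w => (ball (0:ℂ) ρ).indicator (fun w => g (z₀ + w)) w with hfdef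
  set F : ℝ × ℝ → ℝ := fun p => p.1 * g (z₀ + (p.1:ℂ) * Complex.exp ((p.2:ℂ) * Complex.I))
    with hFdef
  set Sρ : Set (ℝ × ℝ) := Ioo (0:ℝ) ρ ×ˢ Ioo (-π) π with hSdef
  have hT : Continuous fun p : ℝ × ℝ => z₀ + (p.1:ℂ) * Complex.exp ((p.2:ℂ) * Complex.I) := by
    continuity
  have hFmeas : Measurable F := measurable_fst.mul (hg.comp hT.measurable)
  have hSmeas : MeasurableSet Sρ := measurableSet_Ioo.prod measurableSet_Ioo
  have hmemcb : ∀ p : ℝ × ℝ, 0 ≤ p.1 →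
      dist (z₀ + (p.1:ℂ) * Complex.exp ((p.2:ℂ) * Complex.I)) z₀ = p.1 := by
    intro p hp
    rw [dist_eq_norm, add_sub_cancel_left, norm_mul,
      Complex.norm_exp_ofReal_mul_I, mul_one, Complex.norm_real, Real.norm_eq_abs,
      abs_of_nonneg hp]
  -- step 1 : polar change of variables
  have key : (∫ p in polarCoord.target, p.1 • f (Complex.polarCoord.symm p)) = ∫ w, f w :=
    Complex.integral_comp_polarCoord_symm f
  -- step 2 : translate
  have hfint : ∫ w, f w = ∫ y in ball z₀ ρ, g y := by
    have hmem : ∀ w : ℂ, z₀ + w ∈ ball z₀ ρ ↔ w ∈ ball (0:ℂ) ρ := by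
      intro w; simp [mem_ball, dist_eq_norm]
    have h1 : ∀ w, ((ball z₀ ρ).indicator g) (z₀ + w) = f w := by
      intro w
      simp only [hfdef]
      by_cases hw : w ∈ ball (0:ℂ) ρ
      · rw [Set.indicator_of_mem ((hmem w).2 hw), Set.indicator_of_mem hw]
      · rw [Set.indicator_of_notMem (fun h => hw ((hmem w).1 h)),
          Set.indicator_of_notMem hw]
    calc ∫ w, f w = ∫ w, ((ball z₀ ρ).indicator g) (z₀ + w) := by
          exact integral_congr_ae (Eventually.of_forall fun w => (h1 w).symm)
      _ = ∫ y, ((ball z₀ ρ).indicator g) y := integral_add_left_eq_self _ z₀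
      _ = ∫ y in ball z₀ ρ, g y := integral_indicator measurableSet_ball
  -- step 3 : shrink the target
  have habs : ∀ p : ℝ × ℝ, 0 < p.1 → ‖Complex.polarCoord.symm p‖ = p.1 := by
    intro p hp; rw [Complex.norm_polarCoord_symm, abs_of_pos hp]
  have htarget : (∫ p in polarCoord.target, p.1 • f (Complex.polarCoord.symm p))
      = ∫ p in Sρ, p.1 • f (Complex.polarCoord.symm p) := by
    rw [polarCoord_target]
    refine setIntegral_eq_of_subset_of_forall_diff_eq_zero
      (measurableSet_Ioi.prod measurableSet_Ioo)
      (prod_mono Ioo_subset_Ioi_self subset_rfl) ?_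
    rintro p ⟨⟨hp1, hp2⟩, hpn⟩
    have hp1' : (p.1 : ℝ) ∈ Ioi (0:ℝ) := hp1
    have : ρ ≤ p.1 := by
      by_contra hlt
      exact hpn ⟨⟨hp1', lt_of_not_ge hlt⟩, hp2⟩
    have : f (Complex.polarCoord.symm p) = 0 := by
      apply Set.indicator_of_notMem
      rw [mem_ball, dist_zero_right, habs p hp1']
      exact not_lt.2 this
    rw [this, smul_zero]
  -- step 4 : identify the integrand on Sρ
  have hcongr : ∫ p in Sρ, p.1 • f (Complex.polarCoord.symm p) = ∫ p in Sρ, F p := by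
    refine setIntegral_congr_fun hSmeas ?_
    rintro p ⟨hp1, hp2⟩
    have hball : Complex.polarCoord.symm p ∈ ball (0:ℂ) ρ := by
      rw [mem_ball, dist_zero_right, habs p hp1.1]
      exact hp1.2
    have hsymm : Complex.polarCoord.symm p = (p.1:ℂ) * Complex.exp ((p.2:ℂ) * Complex.I) := by
      rw [Complex.polarCoord_symm_apply, Complex.exp_mul_I, ← Complex.ofReal_cos,
        ← Complex.ofReal_sin]
    simp only [smul_eq_mul, hFdef, hfdef]
    rw [hsymm] at hball ⊢
    rw [Set.indicator_of_mem hball]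
  -- step 5 : integrability on Sρ
  have hSvol : volume Sρ < ⊤ := by
    rw [hSdef, Measure.volume_eq_prod, Measure.prod_prod, Real.volume_Ioo, Real.volume_Ioo]
    exact ENNReal.mul_lt_top ENNReal.ofReal_lt_top ENNReal.ofReal_lt_top
  have hFi : IntegrableOn F Sρ := by
    refine Integrable.mono' (g := fun _ : ℝ × ℝ => ρ * M)
      (integrableOn_const hSvol.ne) hFmeas.aestronglyMeasurable ?_
    filter_upwards [ae_restrict_mem hSmeas] with p hp
    rcases hp with ⟨hp1, _⟩
    have hmem' : z₀ + (p.1:ℂ) * Complex.exp ((p.2:ℂ) * Complex.I) ∈ closedBall z₀ ρ := by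
      rw [mem_closedBall, hmemcb p hp1.1.le]; exact hp1.2.le
    have h0 : 0 ≤ F p := mul_nonneg hp1.1.le (hg0 _)
    rw [Real.norm_of_nonneg h0]
    exact mul_le_mul hp1.2.le (hgM _ hmem') (hg0 _) hρ.le
  -- step 6 : Fubini
  have hfub : ∫ p in Sρ, F p = ∫ s in Ioo (0:ℝ) ρ, ∫ θ in Ioo (-π) π, F (s, θ) := by
    rw [hSdef, Measure.volume_eq_prod]
    refine setIntegral_prod F ?_
    rw [← Measure.volume_eq_prod]
    exact hFi
  -- step 7 : circle bound for each radius
  have hcirc : ∀ s : ℝ, 0 < s → s ≤ ρ →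
      2 * π * u z₀ * s ≤ ∫ θ in Ioo (-π) π, F (s, θ) := by
    intro s hs0 hsρ
    have hsubD : closedBall z₀ s ⊆ D := (closedBall_subset_closedBall hsρ).trans hB
    have h1 := hsub.2 z₀ s hs0 hsubD
    set G : ℝ → ℝ := fun θ => g (z₀ + (s:ℂ) * Complex.exp ((θ:ℂ) * Complex.I)) with hGdef
    have hcg : ∀ φ : ℝ, u (z₀ + (s:ℂ) * Complex.exp ((φ:ℂ) * Complex.I)) = G φ := by
      intro φ
      simp only [hGdef]
      rw [hgeq]
      apply hsubD
      rw [mem_closedBall]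
      rw [show dist (z₀ + (s:ℂ) * Complex.exp ((φ:ℂ) * Complex.I)) z₀ = s from
        hmemcb (s, φ) hs0.le]
    have h1' : 2 * π * u z₀ ≤ ∫ φ in (0:ℝ)..(2*π), G φ := by
      have heq : (∫ φ in (0:ℝ)..(2*π), u (z₀ + (s:ℂ) * Complex.exp ((φ:ℂ) * Complex.I)))
          = ∫ φ in (0:ℝ)..(2*π), G φ :=
        intervalIntegral.integral_congr (fun φ _ => hcg φ)
      rw [heq] at h1
      have h2π : (0:ℝ) < 2 * π := by positivity
      calc 2*π*u z₀ ≤ 2*π*((1/(2*π)) * ∫ φ in (0:ℝ)..(2*π), G φ) :=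
            mul_le_mul_of_nonneg_left h1 h2π.le
        _ = ∫ φ in (0:ℝ)..(2*π), G φ := by field_simp
    have hper : Function.Periodic G (2*π) := by
      intro θ
      simp only [hGdef]
      congr 3
      push_cast
      rw [add_mul, Complex.exp_add, Complex.exp_two_pi_mul_I, mul_one]
    have hshift : (∫ θ in (-π)..(π), G θ) = ∫ φ in (0:ℝ)..(2*π), G φ := by
      have h3 := hper.intervalIntegral_add_eq (-π) 0
      simpa only [show -π + 2*π = π from by ring, zero_add] using h3
    have hIoo : (∫ θ in Ioo (-π) π, F (s, θ)) = s * ∫ θ in Ioo (-π) π, G θ := by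
      simp only [hFdef]
      exact integral_const_mul s _
    have hIoo2 : (∫ θ in Ioo (-π) π, G θ) = ∫ φ in (0:ℝ)..(2*π), G φ := by
      rw [← integral_Ioc_eq_integral_Ioo,
        ← intervalIntegral.integral_of_le (show -π ≤ π by linarith [Real.pi_pos]), hshift]
    calc 2*π*u z₀*s = s * (2*π*u z₀) := by ring
      _ ≤ s * ∫ φ in (0:ℝ)..(2*π), G φ := mul_le_mul_of_nonneg_left h1' hs0.le
      _ = ∫ θ in Ioo (-π) π, F (s, θ) := by rw [hIoo, hIoo2]
  -- step 8 : integrate over the radius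
  have hInner_int : IntegrableOn (fun s => ∫ θ in Ioo (-π) π, F (s, θ)) (Ioo (0:ℝ) ρ) := by
    have h2 : Integrable F
        ((volume.restrict (Ioo (0:ℝ) ρ)).prod (volume.restrict (Ioo (-π) π))) := by
      rw [Measure.prod_restrict, ← Measure.volume_eq_prod]
      exact hFi
    exact h2.integral_prod_left
  have hlow_int : IntegrableOn (fun s : ℝ => 2*π*u z₀*s) (Ioo (0:ℝ) ρ) := by
    exact ((continuous_const.mul continuous_id).continuousOn.integrableOn_compact
      isCompact_Icc).mono_set Ioo_subset_Icc_self
  have hmono := setIntegral_mono_on hlow_int hInner_int measurableSet_Ioo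
    (fun s hs => hcirc s hs.1 hs.2.le)
  have hlow : (∫ s in Ioo (0:ℝ) ρ, 2*π*u z₀*s) = π * ρ^2 * u z₀ := by
    rw [show (fun s : ℝ => 2*π*u z₀*s) = (fun s : ℝ => 2*π*u z₀*s) from rfl,
      integral_const_mul, ← integral_Ioc_eq_integral_Ioo,
      ← intervalIntegral.integral_of_le hρ.le, integral_id]
    ring
  calc Real.pi * ρ^2 * u z₀ = ∫ s in Ioo (0:ℝ) ρ, 2*π*u z₀*s := hlow.symm
    _ ≤ ∫ s in Ioo (0:ℝ) ρ, ∫ θ in Ioo (-π) π, F (s, θ) := hmono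
    _ = ∫ p in Sρ, F p := hfub.symm
    _ = ∫ p in polarCoord.target, p.1 • f (Complex.polarCoord.symm p) := by
        rw [htarget, hcongr]
    _ = ∫ w, f w := key
    _ = ∫ y in ball z₀ ρ, g y := hfint

lemma integrableOn_of_bounded_ball {g : ℂ → ℝ} (hg : Measurable g) {z : ℂ} {ρ M : ℝ}
    (hbd : ∀ x ∈ closedBall z ρ, |g x| ≤ M) : IntegrableOn g (ball z ρ) := by
  refine Integrable.mono' (g := fun _ : ℂ => M)
    (integrableOn_const measure_ball_lt_top.ne) hg.aestronglyMeasurable ?_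
  filter_upwards [ae_restrict_mem measurableSet_ball] with x hx
  exact hbd x (ball_subset_closedBall hx)

lemma main_ge_one {p : ℝ} (hp : 0 < p) (hp1 : 1 ≤ p) {D : Set ℂ} (hD : IsOpen D)
    {u : ℂ → ℝ} (hsub : IsSubharmonicOn u D) (hpos : ∀ z ∈ D, 0 ≤ u z)
    (z : ℂ) (r : ℝ) (hr : 0 < r) (hB : closedBall z r ⊆ D) :
    u z ^ p ≤ (Real.pi * r ^ 2)⁻¹ * ∫ y in ball z r, u y ^ p := by
  set g : ℂ → ℝ := D.indicator u with hgdef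
  have hg : Measurable g := usc_measurable_indicator hD hsub.1
  have hg0 : ∀ x, 0 ≤ g x := fun x => Set.indicator_nonneg (fun y hy => hpos y hy) x
  have hgeq : ∀ x ∈ D, g x = u x := fun x hx => Set.indicator_of_mem hx u
  obtain ⟨M, hM0, hM⟩ := usc_bddAbove hD hsub.1 (isCompact_closedBall z r) hB
  have hgM : ∀ x ∈ closedBall z r, g x ≤ M := fun x hx => by
    rw [hgeq x (hB hx)]; exact hM x hx
  have hπr : (0:ℝ) < Real.pi * r ^ 2 := by positivity
  have harea := area_submean hD hsub hpos hr hB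
  set μ := volume.restrict (ball z r) with hμdef
  haveI : IsFiniteMeasure μ := ⟨by rw [Measure.restrict_apply_univ]; exact measure_ball_lt_top⟩
  haveI : NeZero μ := by
    refine ⟨fun h0 => ?_⟩
    have h1 : volume (ball z r) = 0 := by
      rw [← Measure.restrict_apply_univ, ← hμdef, h0]; rfl
    exact (measure_ball_pos volume z hr).ne' h1
  have hμuniv : (μ Set.univ).toReal = Real.pi * r ^ 2 := by
    rw [hμdef, Measure.restrict_apply_univ, Complex.volume_ball, ENNReal.toReal_mul,
      ENNReal.toReal_pow, ENNReal.toReal_ofReal hr.le, ENNReal.coe_toReal, NNReal.coe_real_pi]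
    ring
  have hInt : Integrable g μ :=
    integrableOn_of_bounded_ball hg (fun x hx => by
      rw [abs_of_nonneg (hg0 x)]; exact hgM x hx)
  have hrpow_cont : Continuous fun x : ℝ => x ^ p :=
    continuous_iff_continuousAt.2 fun x => Real.continuousAt_rpow_const x p (Or.inr hp.le)
  have hIntp : Integrable (fun x => g x ^ p) μ :=
    integrableOn_of_bounded_ball (g := fun x => g x ^ p) (hrpow_cont.measurable.comp hg) (fun x hx => by
      rw [abs_of_nonneg (Real.rpow_nonneg (hg0 x) p)]
      exact Real.rpow_le_rpow (hg0 x) (hgM x hx) hp.le)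
  have hjensen := (convexOn_rpow hp1).map_average_le hrpow_cont.continuousOn isClosed_Ici
    (Eventually.of_forall fun x => hg0 x) hInt hIntp
  have havg : ∀ h : ℂ → ℝ, (⨍ x, h x ∂μ) = (Real.pi * r ^ 2)⁻¹ * ∫ y in ball z r, h y := by
    intro h
    rw [average_eq, measureReal_def, hμuniv, smul_eq_mul]
  have huz : u z ≤ ⨍ x, g x ∂μ := by
    rw [havg g, inv_mul_eq_div, le_div_iff₀ hπr, mul_comm (u z)]
    exact harea
  have hzD : z ∈ D := hB (mem_closedBall_self hr.le)
  calc u z ^ p ≤ (⨍ x, g x ∂μ) ^ p := Real.rpow_le_rpow (hpos z hzD) huz hp.le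
    _ ≤ ⨍ x, g x ^ p ∂μ := hjensen
    _ = (Real.pi * r ^ 2)⁻¹ * ∫ y in ball z r, g y ^ p := havg _
    _ = (Real.pi * r ^ 2)⁻¹ * ∫ y in ball z r, u y ^ p := by
        congr 1
        refine setIntegral_congr_fun measurableSet_ball (fun y hy => ?_)
        rw [hgeq y (hB (ball_subset_closedBall hy))]

lemma main_lt_one {p : ℝ} (hp : 0 < p) (hp1 : p < 1) {D : Set ℂ} (hD : IsOpen D)
    {u : ℂ → ℝ} (hsub : IsSubharmonicOn u D) (hpos : ∀ z ∈ D, 0 ≤ u z)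
    (z : ℂ) (r : ℝ) (hr : 0 < r) (hB : closedBall z r ⊆ D) :
    u z ^ p ≤ (2 * 2 ^ (2/p) * p * ((2:ℝ) ^ (-(2/p)) / 2 / (1-p)) ^ ((p-1)/p)) ^ p *
      ((Real.pi * r ^ 2)⁻¹ * ∫ y in ball z r, u y ^ p) := by
  set g : ℂ → ℝ := D.indicator u with hgdef
  have hg : Measurable g := usc_measurable_indicator hD hsub.1
  have hg0 : ∀ x, 0 ≤ g x := fun x => Set.indicator_nonneg (fun y hy => hpos y hy) x
  have hgeq : ∀ x ∈ D, g x = u x := fun x hx => Set.indicator_of_mem hx u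
  obtain ⟨B, hB0, hBnd⟩ := usc_bddAbove hD hsub.1 (isCompact_closedBall z r) hB
  have hgB : ∀ x ∈ closedBall z r, g x ≤ B := fun x hx => by
    rw [hgeq x (hB hx)]; exact hBnd x hx
  have hπr : (0:ℝ) < Real.pi * r ^ 2 := by positivity
  set q : ℝ := 2/p with hqdef
  have hq : 0 < q := by positivity
  set ε : ℝ := (2:ℝ) ^ (-q) / 2 with hεdef
  have hε : 0 < ε := by positivity
  set δ : ℝ := ε / (1-p) with hδdef
  have h1p : (0:ℝ) < 1 - p := by linarith
  have hδ : 0 < δ := by positivity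
  set c : ℝ := δ ^ ((p-1)/p) with hcdef
  have hc : 0 < c := Real.rpow_pos_of_pos hδ _
  set I : ℝ := ∫ y in ball z r, g y ^ p with hIdef
  have hI0 : 0 ≤ I := setIntegral_nonneg measurableSet_ball
    (fun y _ => Real.rpow_nonneg (hg0 y) p)
  set Q : ℝ := (Real.pi * r ^ 2)⁻¹ * I with hQdef
  have hQ0 : 0 ≤ Q := mul_nonneg (by positivity) hI0
  set K : ℝ := p * c * Q ^ (1/p) with hKdef
  have hK0 : 0 ≤ K := by positivity
  have hrpow_cont : Continuous fun x : ℝ => x ^ p :=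
    continuous_iff_continuousAt.2 fun x => Real.continuousAt_rpow_const x p (Or.inr hp.le)
  have hIp : IntegrableOn (fun y => g y ^ p) (ball z r) :=
    integrableOn_of_bounded_ball (g := fun x => g x ^ p) (hrpow_cont.measurable.comp hg)
      (fun x hx => by
        rw [abs_of_nonneg (Real.rpow_nonneg (hg0 x) p)]
        exact Real.rpow_le_rpow (hg0 x) (hgB x hx) hp.le)
  -- the radial supremum function
  set f : ℝ → ℝ := fun t => sSup (u '' closedBall z (t*r)) with hfdef
  have hsub_cb : ∀ t : ℝ, t ≤ 1 → closedBall z (t*r) ⊆ closedBall z r :=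
    fun t ht => closedBall_subset_closedBall (mul_le_of_le_one_left hr.le ht)
  have hbdd : ∀ t : ℝ, t ≤ 1 → BddAbove (u '' closedBall z (t*r)) := by
    intro t ht
    exact ⟨B, by rintro y ⟨x, hx, rfl⟩; exact hBnd x (hsub_cb t ht hx)⟩
  have hne : ∀ t : ℝ, 0 ≤ t → (u '' closedBall z (t*r)).Nonempty :=
    fun t ht => ⟨u z, z, mem_closedBall_self (by positivity), rfl⟩
  have hfz : ∀ t : ℝ, 0 ≤ t → t ≤ 1 → u z ≤ f t := fun t ht0 ht1 =>
    le_csSup (hbdd t ht1) (mem_image_of_mem u (mem_closedBall_self (by positivity)))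
  have hzD : z ∈ D := hB (mem_closedBall_self hr.le)
  have hf0 : ∀ t : ℝ, 0 ≤ t → t ≤ 1 → 0 ≤ f t := fun t ht0 ht1 =>
    le_trans (hpos z hzD) (hfz t ht0 ht1)
  have hf_le : ∀ t : ℝ, 0 ≤ t → t ≤ 1 → f t ≤ B := fun t ht0 ht1 =>
    csSup_le (hne t ht0) (by rintro y ⟨x, hx, rfl⟩; exact hBnd x (hsub_cb t ht1 hx))
  -- the iteration step
  have hstep : ∀ t s : ℝ, 0 ≤ t → t < s → s ≤ 1 →
      f t ≤ ε * f s + K * (s - t) ^ (-q) := by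
    intro t s ht0 hts hs1
    have hst0 : (0:ℝ) < s - t := by linarith
    have hs0 : (0:ℝ) < s := lt_of_le_of_lt ht0 hts
    set ρ : ℝ := (s - t) * r with hρdef
    have hρ0 : 0 < ρ := by positivity
    have hfs0 : 0 ≤ f s := hf0 s hs0.le hs1
    have hballr : ball z (s*r) ⊆ ball z r :=
      ball_subset_ball (mul_le_of_le_one_left hr.le hs1)
    have hpoint : ∀ y ∈ ball z (s*r), g y ≤ (f s) ^ (1-p) * g y ^ p := by
      intro y hy
      have hyD : y ∈ D := hB (ball_subset_closedBall (hballr hy))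
      have huy : u y ≤ f s := le_csSup (hbdd s hs1)
        (mem_image_of_mem u (ball_subset_closedBall hy))
      have hgy : g y ≤ f s := by rw [hgeq y hyD]; exact huy
      by_cases h0 : g y = 0
      · rw [h0, Real.zero_rpow hp.ne', mul_zero]
      · have hgy0 : 0 < g y := lt_of_le_of_ne (hg0 y) (Ne.symm h0)
        have hsplit : g y = g y ^ (1-p) * g y ^ p := by
          rw [← Real.rpow_add hgy0]; norm_num
        calc g y = g y ^ (1-p) * g y ^ p := hsplit
          _ ≤ (f s) ^ (1-p) * g y ^ p := mul_le_mul_of_nonneg_right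
            (Real.rpow_le_rpow (hg0 y) hgy h1p.le) (Real.rpow_nonneg (hg0 y) p)
    have hw : ∀ w ∈ closedBall z (t*r), u w ≤ ε * f s + K * (s-t) ^ (-q) := by
      intro w hwmem
      have hdistw : dist w z ≤ t*r := mem_closedBall.1 hwmem
      have hballsub : ball w ρ ⊆ ball z (s*r) := by
        intro y hy
        rw [mem_ball] at hy ⊢
        calc dist y z ≤ dist y w + dist w z := dist_triangle y w z
          _ < ρ + t*r := by linarith
          _ = s*r := by rw [hρdef]; ring
      have hcbsub : closedBall w ρ ⊆ closedBall z r := by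
        intro y hy
        rw [mem_closedBall] at hy ⊢
        calc dist y z ≤ dist y w + dist w z := dist_triangle y w z
          _ ≤ ρ + t*r := by linarith
          _ = s*r := by rw [hρdef]; ring
          _ ≤ r := mul_le_of_le_one_left hr.le hs1
      have harea := area_submean hD hsub hpos hρ0 (hcbsub.trans hB)
      have hIg_w : IntegrableOn g (ball w ρ) :=
        integrableOn_of_bounded_ball hg (fun x hx => by
          rw [abs_of_nonneg (hg0 x)]; exact hgB x (hcbsub hx))
      have hIp_w : IntegrableOn (fun y => g y ^ p) (ball w ρ) :=
        hIp.mono_set (fun y hy => hballr (hballsub hy))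
      have hI_w : IntegrableOn (fun y => (f s) ^ (1-p) * g y ^ p) (ball w ρ) :=
        hIp_w.const_mul _
      have hsetmono : (∫ y in ball w ρ, g y ^ p) ≤ I := by
        rw [hIdef]
        refine setIntegral_mono_set hIp ?_ ?_
        · filter_upwards with y using Real.rpow_nonneg (hg0 y) p
        · exact HasSubset.Subset.eventuallyLE (fun y hy => hballr (hballsub hy))
      have hstep2 : (∫ y in ball w ρ, g y) ≤ (f s) ^ (1-p) * I := by
        calc (∫ y in ball w ρ, g y) ≤ ∫ y in ball w ρ, (f s) ^ (1-p) * g y ^ p :=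
              setIntegral_mono_on hIg_w hI_w measurableSet_ball
                (fun y hy => hpoint y (hballsub hy))
          _ = (f s) ^ (1-p) * ∫ y in ball w ρ, g y ^ p := integral_const_mul _ _
          _ ≤ (f s) ^ (1-p) * I :=
              mul_le_mul_of_nonneg_left hsetmono (Real.rpow_nonneg hfs0 _)
      have hπρ : (0:ℝ) < Real.pi * ρ ^ 2 := by positivity
      have h7 : u w ≤ (Real.pi * ρ ^ 2)⁻¹ * ((f s) ^ (1-p) * I) := by
        rw [inv_mul_eq_div, le_div_iff₀ hπρ, mul_comm (u w)]
        exact le_trans harea hstep2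
      have hrw2 : (s-t) ^ (-(2:ℝ)) = ((s-t)^(2:ℕ))⁻¹ := by
        rw [Real.rpow_neg hst0.le, show ((2:ℝ)) = ((2:ℕ):ℝ) by norm_num, Real.rpow_natCast]
      have he : (Real.pi * ρ ^ 2)⁻¹ * ((f s) ^ (1-p) * I)
          = (f s) ^ (1-p) * ((s-t) ^ (-(2:ℝ)) * Q) := by
        rw [hrw2, hQdef, hρdef,
          show Real.pi * ((s-t)*r)^2 = (s-t)^(2:ℕ) * (Real.pi * r^2) from by ring, mul_inv]
        ring
      rw [he] at h7
      -- Young's inequality step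
      set X : ℝ := (s-t) ^ (-(2:ℝ)) * Q with hXdef
      have hX0 : 0 ≤ X := mul_nonneg (Real.rpow_nonneg hst0.le _) hQ0
      have hyoung : (f s) ^ (1-p) * X ≤ ε * f s + K * (s-t) ^ (-q) := by
        have hgm := Real.geom_mean_le_arith_mean2_weighted h1p.le hp.le
          (mul_nonneg hδ.le hfs0)
          (mul_nonneg hc.le (Real.rpow_nonneg hX0 (1/p))) (by ring)
        have e1 : (δ * f s) ^ (1-p) = δ ^ (1-p) * (f s) ^ (1-p) := Real.mul_rpow hδ.le hfs0
        have e2 : (c * X ^ (1/p)) ^ p = c ^ p * X := by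
          rw [Real.mul_rpow hc.le (Real.rpow_nonneg hX0 _), ← Real.rpow_mul hX0, one_div,
            inv_mul_cancel₀ hp.ne', Real.rpow_one]
        have e3 : δ ^ (1-p) * c ^ p = 1 := by
          rw [hcdef, ← Real.rpow_mul hδ.le, div_mul_cancel₀ _ hp.ne', ← Real.rpow_add hδ]
          norm_num
        have hlhs : (δ * f s) ^ (1-p) * (c * X ^ (1/p)) ^ p = (f s) ^ (1-p) * X := by
          rw [e1, e2]
          calc δ ^ (1-p) * (f s) ^ (1-p) * (c ^ p * X)
              = (δ ^ (1-p) * c ^ p) * ((f s) ^ (1-p) * X) := by ring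
            _ = (f s) ^ (1-p) * X := by rw [e3, one_mul]
        have e4 : (1-p) * (δ * f s) = ε * f s := by
          rw [hδdef]
          field_simp
        have e5 : X ^ (1/p) = (s-t) ^ (-q) * Q ^ (1/p) := by
          rw [hXdef, Real.mul_rpow (Real.rpow_nonneg hst0.le _) hQ0,
            ← Real.rpow_mul hst0.le,
            (by rw [hqdef]; ring : -(2:ℝ) * (1/p) = -q)]
        have e6 : p * (c * X ^ (1/p)) = K * (s-t) ^ (-q) := by
          rw [e5, hKdef]; ring
        calc (f s) ^ (1-p) * X = (δ * f s) ^ (1-p) * (c * X ^ (1/p)) ^ p := hlhs.symm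
          _ ≤ (1-p) * (δ * f s) + p * (c * X ^ (1/p)) := hgm
          _ = ε * f s + K * (s-t) ^ (-q) := by rw [e4, e6]
      exact le_trans h7 hyoung
    exact csSup_le (hne t ht0) (by rintro y ⟨x, hx, rfl⟩; exact hw x hx)
  -- absorption argument
  set h : ℝ → ℝ := fun t => f t * (1-t) ^ q with hhdef
  set S : ℝ := sSup (h '' Icc (0:ℝ) 1) with hSdef
  have hSbdd : BddAbove (h '' Icc (0:ℝ) 1) := by
    refine ⟨B, ?_⟩
    rintro y ⟨t, ht, rfl⟩
    simp only [hhdef]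
    calc f t * (1-t) ^ q ≤ B * 1 :=
          mul_le_mul (hf_le t ht.1 ht.2)
            (Real.rpow_le_one (by linarith [ht.2]) (by linarith [ht.1]) hq.le)
            (Real.rpow_nonneg (by linarith [ht.2]) q) hB0
      _ = B := mul_one B
  have hSne : (h '' Icc (0:ℝ) 1).Nonempty := ⟨h 0, 0, by constructor <;> norm_num, rfl⟩
  have hS0 : 0 ≤ S := by
    have h1mem : h 1 ∈ h '' Icc (0:ℝ) 1 := mem_image_of_mem h (by constructor <;> norm_num)
    have h1val : h 1 = 0 := by
      simp only [hhdef, sub_self, Real.zero_rpow hq.ne', mul_zero]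
    rw [← h1val]
    exact le_csSup hSbdd h1mem
  have h2q : (0:ℝ) < (2:ℝ) ^ q := Real.rpow_pos_of_pos (by norm_num) q
  have hSmain : ∀ t ∈ Icc (0:ℝ) 1, h t ≤ S/2 + (2:ℝ) ^ q * K := by
    rintro t ⟨ht0, ht1⟩
    rcases eq_or_lt_of_le ht1 with heq | hlt
    · rw [heq]
      simp only [hhdef, sub_self, Real.zero_rpow hq.ne', mul_zero]
      positivity
    · set s : ℝ := (1+t)/2 with hsdef
      have hts : t < s := by rw [hsdef]; linarith
      have hs1 : s ≤ 1 := by rw [hsdef]; linarith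
      have hs0 : (0:ℝ) ≤ s := by rw [hsdef]; linarith
      have h1t : (0:ℝ) < 1 - t := by linarith
      have hstv : s - t = (1-t)/2 := by rw [hsdef]; ring
      have h1sv : 1 - s = (1-t)/2 := by rw [hsdef]; ring
      have h8 := hstep t s ht0 hts hs1
      have hmem_s : h s ∈ h '' Icc (0:ℝ) 1 := mem_image_of_mem h ⟨hs0, hs1⟩
      have hhs : h s ≤ S := le_csSup hSbdd hmem_s
      have ht2 : ((1-t)/2) ^ (-q) * (1-t) ^ q = (2:ℝ) ^ q := by
        rw [Real.rpow_neg (by linarith : (0:ℝ) ≤ (1-t)/2),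
          Real.div_rpow h1t.le (by norm_num : (0:ℝ) ≤ 2)]
        have hpos1 : (0:ℝ) < (1-t) ^ q := Real.rpow_pos_of_pos h1t q
        field_simp
      have ht3 : (1-t) ^ q = (2:ℝ) ^ q * (1-s) ^ q := by
        rw [h1sv, ← Real.mul_rpow (by norm_num : (0:ℝ) ≤ 2) (by linarith : (0:ℝ) ≤ (1-t)/2)]
        congr 1
        ring
      have hε2q : ε * (2:ℝ) ^ q = 1/2 := by
        rw [hεdef, Real.rpow_neg (by norm_num : (0:ℝ) ≤ 2)]
        field_simp
      calc h t = f t * (1-t) ^ q := rfl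
        _ ≤ (ε * f s + K * (s-t) ^ (-q)) * (1-t) ^ q :=
            mul_le_mul_of_nonneg_right h8 (Real.rpow_nonneg h1t.le q)
        _ = ε * (2:ℝ) ^ q * (f s * (1-s) ^ q) + K * ((s-t) ^ (-q) * (1-t) ^ q) := by
            rw [ht3]; ring
        _ = (1/2) * h s + K * (2:ℝ) ^ q := by
            rw [hstv, ht2, hε2q, hhdef]
        _ ≤ (1/2) * S + K * (2:ℝ) ^ q := by
            have := mul_le_mul_of_nonneg_left hhs (by norm_num : (0:ℝ) ≤ 1/2)
            linarith
        _ = S/2 + (2:ℝ) ^ q * K := by ring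
  have hS2 : S ≤ S/2 + (2:ℝ) ^ q * K :=
    csSup_le hSne (by rintro y ⟨t, ht, rfl⟩; exact hSmain t ht)
  have hSK : S ≤ 2 * ((2:ℝ) ^ q * K) := by linarith
  have huz : u z ≤ 2 * ((2:ℝ) ^ q * K) := by
    have hf0S : f 0 ≤ S := by
      have : h 0 = f 0 := by
        simp only [hhdef]
        norm_num
      rw [← this]
      exact le_csSup hSbdd (mem_image_of_mem h (by constructor <;> norm_num))
    exact le_trans (le_trans (hfz 0 le_rfl zero_le_one) hf0S) hSK
  -- conclusion
  have hfinal : u z ^ p ≤ (2 * (2:ℝ) ^ q * p * c) ^ p * Q := by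
    have h9 : u z ^ p ≤ (2 * ((2:ℝ) ^ q * K)) ^ p :=
      Real.rpow_le_rpow (hpos z hzD) huz hp.le
    have h10 : (2 * ((2:ℝ) ^ q * K)) ^ p = (2 * (2:ℝ) ^ q * p * c) ^ p * Q := by
      rw [hKdef, show 2 * ((2:ℝ) ^ q * (p * c * Q ^ (1/p)))
          = (2 * (2:ℝ) ^ q * p * c) * Q ^ (1/p) from by ring,
        Real.mul_rpow (by positivity) (Real.rpow_nonneg hQ0 _),
        ← Real.rpow_mul hQ0, one_div, inv_mul_cancel₀ hp.ne', Real.rpow_one]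
    rw [← h10]
    exact h9
  have hIeq : I = ∫ y in ball z r, u y ^ p := by
    rw [hIdef]
    refine setIntegral_congr_fun measurableSet_ball (fun y hy => ?_)
    rw [hgeq y (hB (ball_subset_closedBall hy))]
  rw [hqdef] at hfinal
  rw [hQdef, hIeq] at hfinal
  exact hfinal


/-- **Mean value inequality for powers of non-negative subharmonic functions.** For every
`p > 0` there is a constant `C_p`, depending only on `p`, such that every non-negative
subharmonic function `u` on an open connected set `D ⊆ ℂ` satisfies
`u(z)^p ≤ C_p ⬝ (1/|B(z,r)|) ∫_{B(z,r)} u^p` whenever the closed disc `B̄(z,r) ⊆ D`. -/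
theorem subharmonic_mean_value_inequality (p : ℝ) (hp : 0 < p) :
    ∃ C : ℝ, ∀ (D : Set ℂ), IsOpen D → IsConnected D →
      ∀ u : ℂ → ℝ, IsSubharmonicOn u D → (∀ z ∈ D, 0 ≤ u z) →
        ∀ (z : ℂ) (r : ℝ), 0 < r → closedBall z r ⊆ D →
          u z ^ p ≤ C * ((Real.pi * r ^ 2)⁻¹ * ∫ y in ball z r, u y ^ p) := by
  rcases lt_or_ge p 1 with hp1 | hp1
  · exact ⟨(2 * 2 ^ (2/p) * p * ((2:ℝ) ^ (-(2/p)) / 2 / (1-p)) ^ ((p-1)/p)) ^ p,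
      fun D hD _ u hsub hpos z r hr hBall =>
        main_lt_one hp hp1 hD hsub hpos z r hr hBall⟩
  · exact ⟨1, fun D hD _ u hsub hpos z r hr hBall => by
      rw [one_mul]; exact main_ge_one hp hp1 hD hsub hpos z r hr hBall⟩
end
end

section
/- Let U ⊆ ℂ be an open neighbourhood of the closed unit disc and let u : U ∖ {0} → [0,∞) be a subharmonic function. Assume that for some constants C > 0 and m ≥ 0 one has u(z) ≤ C |Im z|^{-m} for all z in the open unit disc with z ≠ 0. Then there exists a constant C' > 0 such that u(z) ≤ C' |z|^{-m} for all z in the open unit disc with z ≠ 0. (A variant of Domar's lemma.) -/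
open Set Filter Metric MeasureTheory

noncomputable section

section DomarAux
open Real

-- usc bounded on compact
lemma domar_usc_bdd {u : ℂ → ℝ} {D K : Set ℂ} (hu : UpperSemicontinuousOn u D)
    (hK : IsCompact K) (hKD : K ⊆ D) : ∃ T : ℝ, ∀ x ∈ K, u x ≤ T := by
  refine hK.induction_on (p := fun s => ∃ T : ℝ, ∀ x ∈ s, u x ≤ T) ⟨0, by simp⟩ ?_ ?_ ?_
  · rintro s t hst ⟨T, hT⟩; exact ⟨T, fun x hx => hT x (hst hx)⟩
  · rintro s t ⟨T1, h1⟩ ⟨T2, h2⟩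
    exact ⟨max T1 T2, fun x hx => hx.elim (fun h => (h1 x h).trans (le_max_left _ _))
      (fun h => (h2 x h).trans (le_max_right _ _))⟩
  · intro x hx
    have h := hu x (hKD hx) (u x + 1) (by linarith)
    refine ⟨{z | u z < u x + 1}, ?_, ⟨u x + 1, fun y hy => le_of_lt hy⟩⟩
    exact nhdsWithin_mono x hKD h

-- pair bound
lemma domar_pair {a r δ x y : ℝ} (hδ : 0 < δ) (hr : r = 256*δ) (hyx : y ≤ x)
    (hxy : x - y ≤ π) (hx : |a + r*Real.sin x| ≤ δ) (hy : |a + r*Real.sin y| ≤ δ)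
    (hmid : 1/16 ≤ |Real.cos ((x+y)/2)|) : x - y ≤ π/16 := by
  have hπ := Real.pi_pos
  have hr0 : 0 < r := by rw [hr]; linarith
  have h1 : r * |Real.sin x - Real.sin y| ≤ 2*δ := by
    rw [← abs_of_pos hr0, ← abs_mul]
    calc |r * (Real.sin x - Real.sin y)| = |(a + r*Real.sin x) - (a + r*Real.sin y)| := by
          ring_nf
      _ ≤ |a + r*Real.sin x| + |a + r*Real.sin y| := abs_sub _ _
      _ ≤ 2*δ := by linarith
  have h2 : |Real.sin x - Real.sin y| ≤ 1/128 := by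
    rw [hr] at h1; nlinarith
  have h3 : Real.sin x - Real.sin y = 2 * Real.sin ((x-y)/2) * Real.cos ((x+y)/2) :=
    Real.sin_sub_sin x y
  have hs0 : 0 ≤ Real.sin ((x-y)/2) :=
    Real.sin_nonneg_of_nonneg_of_le_pi (by linarith) (by linarith)
  have h4 : (x-y)/π ≤ Real.sin ((x-y)/2) := by
    have := Real.mul_le_sin (x := (x-y)/2) (by linarith) (by linarith)
    calc (x-y)/π = 2/π * ((x-y)/2) := by field_simp
      _ ≤ _ := this
  have h5 : |Real.sin x - Real.sin y| = 2 * Real.sin ((x-y)/2) * |Real.cos ((x+y)/2)| := by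
    rw [h3, abs_mul, abs_of_nonneg (by linarith : (0:ℝ) ≤ 2 * Real.sin ((x-y)/2))]
  set s := Real.sin ((x-y)/2)
  set c := |Real.cos ((x+y)/2)|
  have h4' : x - y ≤ π * s := by rw [div_le_iff₀ hπ] at h4; linarith
  have hsc : s * c ≤ 1/256 := by
    have := abs_nonneg (Real.sin x - Real.sin y); linarith [h5 ▸ h2]
  have hs16 : s ≤ 1/16 := by nlinarith [mul_nonneg hs0 (by linarith : (0:ℝ) ≤ 16*c - 1)]
  calc x - y ≤ π * s := h4'
    _ ≤ π * (1/16) := mul_le_mul_of_nonneg_left hs16 hπ.le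
    _ = π/16 := by ring

lemma domar_vol' {a r δ : ℝ} (hδ : 0 < δ) (hr : r = 256*δ)
    (domar_pair : ∀ {x y : ℝ}, y ≤ x → x - y ≤ π → |a + r*Real.sin x| ≤ δ →
      |a + r*Real.sin y| ≤ δ → 1/16 ≤ |Real.cos ((x+y)/2)| → x - y ≤ π/16) :
    volume ({t : ℝ | |a + r * Real.sin t| ≤ δ} ∩ Icc 0 (2*π)) ≤ ENNReal.ofReal (5*π/16) := by
  have hπ := Real.pi_pos
  set bad := {t : ℝ | |a + r * Real.sin t| ≤ δ} with hbad
  set S1 := Icc (π/2 - π/32) (π/2 + π/32) with hS1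
  set S2 := Icc (3*π/2 - π/32) (3*π/2 + π/32) with hS2
  set K1 := bad ∩ Icc 0 (π/2) ∩ {t | 1/16 ≤ |Real.cos t|} with hK1d
  set K2 := bad ∩ Icc (π/2) (3*π/2) ∩ {t | 1/16 ≤ |Real.cos t|} with hK2d
  set K3 := bad ∩ Icc (3*π/2) (2*π) ∩ {t | 1/16 ≤ |Real.cos t|} with hK3d
  have habs : ∀ t : ℝ, |t| ≤ π/2 → |Real.sin t| = Real.sin |t| := by
    intro t ht
    rcases le_or_gt 0 t with h | h
    · rw [abs_of_nonneg h, abs_of_nonneg (Real.sin_nonneg_of_nonneg_of_le_pi h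
        (by rw [abs_of_nonneg h] at ht; linarith))]
    · have h1 : 0 ≤ Real.sin (-t) := Real.sin_nonneg_of_nonneg_of_le_pi (by linarith)
        (by rw [abs_of_neg h] at ht; linarith)
      rw [Real.sin_neg] at h1
      rw [abs_of_neg h, Real.sin_neg, abs_of_nonpos (by linarith)]
  have hsmall : ∀ t : ℝ, |t| ≤ π/2 → |Real.sin t| < 1/16 → |t| ≤ π/32 := by
    intro t ht hlt
    by_contra hgt; push_neg at hgt
    have h1 := Real.mul_le_sin (x := |t|) (abs_nonneg t) ht
    rw [habs t ht] at hlt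
    have h2 : 2/π * (π/32) ≤ 2/π * |t| := mul_le_mul_of_nonneg_left hgt.le (by positivity)
    have heq : 2/π * (π/32) = 1/16 := by field_simp; ring
    linarith
  have hcov : bad ∩ Icc 0 (2*π) ⊆ S1 ∪ S2 ∪ K1 ∪ K2 ∪ K3 := by
    rintro φ ⟨hb, h0, h2π⟩
    by_cases hc : 1/16 ≤ |Real.cos φ|
    · rcases le_total φ (π/2) with h | h
      · exact Or.inl (Or.inl (Or.inr ⟨⟨hb, h0, h⟩, hc⟩))
      · rcases le_total φ (3*π/2) with h' | h'
        · exact Or.inl (Or.inr ⟨⟨hb, h, h'⟩, hc⟩)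
        · exact Or.inr ⟨⟨hb, h', h2π⟩, hc⟩
    · push_neg at hc
      rcases le_total φ π with h | h
      · have ht : |π/2 - φ| ≤ π/2 := abs_le.2 ⟨by linarith, by linarith⟩
        have hlt : |Real.sin (π/2 - φ)| < 1/16 := by rw [Real.sin_pi_div_two_sub]; exact hc
        have hin := abs_le.1 (hsmall _ ht hlt)
        exact Or.inl (Or.inl (Or.inl (Or.inl
          ⟨by linarith [hin.2], by linarith [hin.1]⟩)))
      · have ht : |φ - 3*π/2| ≤ π/2 := abs_le.2 ⟨by linarith, by linarith⟩
        have hsin : Real.sin (φ - 3*π/2) = Real.cos φ := by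
          rw [show φ - 3*π/2 = (φ - 2*π) + π/2 by ring, Real.sin_add_pi_div_two,
            Real.cos_sub_two_pi]
        have hlt : |Real.sin (φ - 3*π/2)| < 1/16 := by rw [hsin]; exact hc
        have hin := abs_le.1 (hsmall _ ht hlt)
        exact Or.inl (Or.inl (Or.inl (Or.inr ⟨by linarith [hin.1], by linarith [hin.2]⟩)))
  have hdiam : ∀ (K : Set ℝ), (∀ x ∈ K, ∀ y ∈ K, y ≤ x → x - y ≤ π/16) →
      volume K ≤ ENNReal.ofReal (π/16) := by
    intro K hK
    refine (Real.volume_le_diam K).trans (EMetric.diam_le ?_)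
    intro x hx y hy
    rw [edist_dist]
    refine ENNReal.ofReal_le_ofReal ?_
    rw [Real.dist_eq]
    rcases le_total y x with h | h
    · rw [abs_of_nonneg (by linarith)]; exact hK x hx y hy h
    · rw [abs_of_nonpos (by linarith)]; linarith [hK y hy x hx h]
  have hK1 : volume K1 ≤ ENNReal.ofReal (π/16) := by
    apply hdiam; rintro x ⟨⟨hbx, hx0, hx2⟩, hcx⟩ y ⟨⟨hby, hy0, hy2⟩, hcy⟩ hyx
    simp only [mem_setOf_eq] at hcx hcy hbx hby
    have h2 : 0 ≤ Real.cos x := Real.cos_nonneg_of_mem_Icc ⟨by linarith, hx2⟩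
    have hmid : 1/16 ≤ |Real.cos ((x+y)/2)| := by
      have h1 : Real.cos x ≤ Real.cos ((x+y)/2) :=
        Real.cos_le_cos_of_nonneg_of_le_pi (by linarith) (by linarith) (by linarith)
      rw [abs_of_nonneg h2] at hcx
      exact le_trans (by linarith) (le_abs_self _)
    exact domar_pair hyx (by linarith) hbx hby hmid
  have hK2 : volume K2 ≤ ENNReal.ofReal (π/16) := by
    apply hdiam; rintro x ⟨⟨hbx, hx0, hx2⟩, hcx⟩ y ⟨⟨hby, hy0, hy2⟩, hcy⟩ hyx
    simp only [mem_setOf_eq] at hcx hcy hbx hby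
    have hnx : Real.cos x ≤ 0 :=
      Real.cos_nonpos_of_pi_div_two_le_of_le hx0 (by linarith)
    have hny : Real.cos y ≤ 0 :=
      Real.cos_nonpos_of_pi_div_two_le_of_le hy0 (by linarith)
    rw [abs_of_nonpos hnx] at hcx
    rw [abs_of_nonpos hny] at hcy
    have hmid : 1/16 ≤ |Real.cos ((x+y)/2)| := by
      have hm : Real.cos ((x+y)/2) ≤ -(1/16) := by
        rcases le_total ((x+y)/2) π with h | h
        · have h1 : Real.cos ((x+y)/2) ≤ Real.cos y :=
            Real.cos_le_cos_of_nonneg_of_le_pi (by linarith) h (by linarith)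
          linarith
        · have h1 : Real.cos (2*π - (x+y)/2) ≤ Real.cos (2*π - x) :=
            Real.cos_le_cos_of_nonneg_of_le_pi (by linarith) (by linarith) (by linarith)
          rw [Real.cos_two_pi_sub, Real.cos_two_pi_sub] at h1
          linarith
      rw [abs_of_nonpos (by linarith)]; linarith
    exact domar_pair hyx (by linarith) hbx hby hmid
  have hK3 : volume K3 ≤ ENNReal.ofReal (π/16) := by
    apply hdiam; rintro x ⟨⟨hbx, hx0, hx2⟩, hcx⟩ y ⟨⟨hby, hy0, hy2⟩, hcy⟩ hyx
    simp only [mem_setOf_eq] at hcx hcy hbx hby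
    have hpy : 0 ≤ Real.cos y := by
      rw [← Real.cos_two_pi_sub]
      exact Real.cos_nonneg_of_mem_Icc ⟨by linarith, by linarith⟩
    rw [abs_of_nonneg hpy] at hcy
    have hmid : 1/16 ≤ |Real.cos ((x+y)/2)| := by
      have h1 : Real.cos (2*π - y) ≤ Real.cos (2*π - (x+y)/2) :=
        Real.cos_le_cos_of_nonneg_of_le_pi (by linarith) (by linarith) (by linarith)
      rw [Real.cos_two_pi_sub, Real.cos_two_pi_sub] at h1
      exact le_trans (by linarith) (le_abs_self _)
    exact domar_pair hyx (by linarith) hbx hby hmid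
  have hS1v : volume S1 = ENNReal.ofReal (π/16) := by
    rw [hS1, Real.volume_Icc]; congr 1; ring
  have hS2v : volume S2 = ENNReal.ofReal (π/16) := by
    rw [hS2, Real.volume_Icc]; congr 1; ring
  calc volume (bad ∩ Icc 0 (2*π)) ≤ volume (S1 ∪ S2 ∪ K1 ∪ K2 ∪ K3) := measure_mono hcov
    _ ≤ volume (S1 ∪ S2 ∪ K1 ∪ K2) + volume K3 := measure_union_le _ _
    _ ≤ (volume (S1 ∪ S2 ∪ K1) + volume K2) + volume K3 := by
        gcongr; exact measure_union_le _ _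
    _ ≤ ((volume (S1 ∪ S2) + volume K1) + volume K2) + volume K3 := by
        gcongr; exact measure_union_le _ _
    _ ≤ (((volume S1 + volume S2) + volume K1) + volume K2) + volume K3 := by
        gcongr; exact measure_union_le _ _
    _ ≤ (((ENNReal.ofReal (π/16) + ENNReal.ofReal (π/16)) + ENNReal.ofReal (π/16))
          + ENNReal.ofReal (π/16)) + ENNReal.ofReal (π/16) := by
        gcongr <;> simp [hS1v, hS2v, hK1, hK2, hK3]
    _ = ENNReal.ofReal (5*π/16) := by
        rw [← ENNReal.ofReal_add (by positivity) (by positivity),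
          ← ENNReal.ofReal_add (by positivity) (by positivity),
          ← ENNReal.ofReal_add (by positivity) (by positivity),
          ← ENNReal.ofReal_add (by positivity) (by positivity)]
        congr 1; ring


lemma domar_vol {a r δ : ℝ} (hδ : 0 < δ) (hr : r = 256*δ) :
    volume ({t : ℝ | |a + r * Real.sin t| ≤ δ} ∩ Icc 0 (2*π)) ≤ ENNReal.ofReal (5*π/16) :=
  domar_vol' hδ hr (fun {x y} hyx hxy hx hy hmid => domar_pair hδ hr hyx hxy hx hy hmid)

lemma domar_step (U : Set ℂ) (hU1 : closedBall (0:ℂ) 1 ⊆ U)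
    (u : ℂ → ℝ) (C m : ℝ) (hC : 0 < C) (hm : 0 < m)
    (hsub : IsSubharmonicOn u (U \ {0}))
    (hbd : ∀ z ∈ ball (0:ℂ) 1, z ≠ 0 → u z ≤ C * |z.im| ^ (-m))
    (z₀ : ℂ) (M : ℝ) (hM : 0 < M) (hMu : M ≤ u z₀)
    (hball : closedBall z₀ (256 * (2*C/M) ^ (1/m)) ⊆ ball (0:ℂ) 1 \ {0}) :
    ∃ z₁ : ℂ, dist z₁ z₀ = 256 * (2*C/M) ^ (1/m) ∧ 2*M ≤ u z₁ := by
  have hπ := Real.pi_pos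
  set δ := (2*C/M) ^ (1/m : ℝ) with hδdef
  have hδ : 0 < δ := Real.rpow_pos_of_pos (by positivity) _
  set r := 256 * δ with hrdef
  have hr0 : 0 < r := by positivity
  have hCδ : C * δ ^ (-m) = M/2 := by
    rw [hδdef, ← Real.rpow_mul (by positivity : (0:ℝ) ≤ 2*C/M),
      show (1/m)*(-m) = (-1 : ℝ) by field_simp, Real.rpow_neg_one]
    field_simp
  by_contra hcon
  push_neg at hcon
  have hcon' : ∀ z₁ : ℂ, dist z₁ z₀ = r → u z₁ < 2*M := hcon
  have hmean := hsub.2 z₀ r hr0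
    (hball.trans (fun x hx => ⟨hU1 (ball_subset_closedBall hx.1), hx.2⟩))
  set c : ℝ → ℂ := fun φ => z₀ + (r:ℂ) * Complex.exp (φ * Complex.I) with hcdef
  have hcd : ∀ φ : ℝ, dist (c φ) z₀ = r := by
    intro φ
    rw [hcdef]
    simp only [Complex.dist_eq, add_sub_cancel_left, norm_mul, Complex.norm_exp_ofReal_mul_I,
      Complex.norm_real, Real.norm_eq_abs, mul_one]
    exact abs_of_pos hr0
  have hcb : ∀ φ : ℝ, c φ ∈ ball (0:ℂ) 1 \ {0} := fun φ =>
    hball (mem_closedBall.2 (le_of_eq (hcd φ)))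
  have hcim : ∀ φ : ℝ, (c φ).im = z₀.im + r * Real.sin φ := by
    intro φ
    simp [hcdef, Complex.add_im, Complex.mul_im, Complex.exp_ofReal_mul_I_im,
      Complex.exp_ofReal_mul_I_re]
  set bad := {t : ℝ | |z₀.im + r * Real.sin t| ≤ δ} with hbaddef
  have hbadm : MeasurableSet bad := by
    have : IsClosed bad :=
      isClosed_le ((continuous_const.add (continuous_const.mul Real.continuous_sin)).abs)
        continuous_const
    exact this.measurableSet
  set g : ℝ → ℝ := fun t => M/2 + (3*M/2) * bad.indicator (fun _ => (1:ℝ)) t with hgdef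
  have hug : ∀ φ : ℝ, u (c φ) ≤ g φ := by
    intro φ
    by_cases hφ : φ ∈ bad
    · rw [hgdef]
      simp only [indicator_of_mem hφ, mul_one]
      linarith [hcon' (c φ) (hcd φ)]
    · rw [hgdef]
      simp only [indicator_of_notMem hφ, mul_zero, add_zero]
      have hgood : δ < |(c φ).im| := by
        rw [hcim φ]
        simpa [hbaddef] using hφ
      calc u (c φ) ≤ C * |(c φ).im| ^ (-m) := hbd _ (hcb φ).1 (hcb φ).2
        _ ≤ C * δ ^ (-m) := by
            apply mul_le_mul_of_nonneg_left _ hC.le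
            exact Real.rpow_le_rpow_of_nonpos hδ hgood.le (neg_nonpos.2 hm.le)
        _ = M/2 := hCδ
  have hind : IntervalIntegrable (fun t => bad.indicator (fun _ => (1:ℝ)) t) volume 0 (2*π) := by
    rw [intervalIntegrable_iff]
    exact (MeasureTheory.integrableOn_const measure_Ioc_lt_top.ne).indicator hbadm
  have hgi : IntervalIntegrable g volume 0 (2*π) := by
    exact intervalIntegrable_const.add (hind.const_mul _)
  by_cases hui : IntervalIntegrable (fun φ => u (c φ)) volume 0 (2*π)
  · have hle : (∫ φ in (0:ℝ)..(2*π), u (c φ)) ≤ ∫ φ in (0:ℝ)..(2*π), g φ :=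
      intervalIntegral.integral_mono_on (by positivity) hui hgi (fun φ _ => hug φ)
    set V := (volume (bad ∩ Ioc 0 (2*π))).toReal with hVdef
    have hindint : (∫ φ in (0:ℝ)..(2*π), bad.indicator (fun _ => (1:ℝ)) φ) = V := by
      rw [intervalIntegral.integral_of_le (by positivity : (0:ℝ) ≤ 2*π),
        MeasureTheory.integral_indicator_const (1:ℝ) hbadm, measureReal_restrict_apply hbadm,
        smul_eq_mul, mul_one, hVdef, measureReal_def]
    have hgint : (∫ φ in (0:ℝ)..(2*π), g φ) = (2*π) * (M/2) + (3*M/2) * V := by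
      rw [hgdef, intervalIntegral.integral_add intervalIntegrable_const (hind.const_mul _),
        intervalIntegral.integral_const, intervalIntegral.integral_const_mul, hindint]
      simp
    have hV : V ≤ 5*π/16 := by
      rw [hVdef]
      refine ENNReal.toReal_le_of_le_ofReal (by positivity) ?_
      refine le_trans (measure_mono (inter_subset_inter_right _ Ioc_subset_Icc_self)) ?_
      exact domar_vol hδ hrdef
    have hfin : u z₀ ≤ 47*M/64 := by
      have h1 : u z₀ ≤ (1 / (2*π)) * ((2*π) * (M/2) + (3*M/2) * V) := by
        rw [← hgint]
        refine hmean.trans ?_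
        exact mul_le_mul_of_nonneg_left hle (by positivity)
      have h2 : (1 / (2*π)) * ((2*π) * (M/2) + (3*M/2) * V) ≤
          (1 / (2*π)) * ((2*π) * (M/2) + (3*M/2) * (5*π/16)) := by
        refine mul_le_mul_of_nonneg_left ?_ (by positivity)
        have : (0:ℝ) ≤ 3*M/2 := by linarith
        nlinarith
      have h3 : (1 / (2*π)) * ((2*π) * (M/2) + (3*M/2) * (5*π/16)) = 47*M/64 := by
        field_simp; ring
      linarith
    linarith
  · rw [intervalIntegral.integral_undef hui] at hmean
    simp at hmean
    linarith


end DomarAux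

/-- **A variant of Domar's lemma.** If `u ≥ 0` is subharmonic on `U ∖ {0}`, where `U` is an
open neighbourhood of the closed unit disc, and `u(z) ≤ C |Im z|^{-m}` on the punctured open
unit disc, then `u(z) ≤ C' |z|^{-m}` there for some constant `C'`. -/
theorem domar_variant (U : Set ℂ) (hU : IsOpen U) (hU1 : closedBall (0:ℂ) 1 ⊆ U)
    (u : ℂ → ℝ) (C m : ℝ) (hC : 0 < C) (hm : 0 ≤ m)
    (hsub : IsSubharmonicOn u (U \ {0}))
    (hpos : ∀ z ∈ U \ {0}, 0 ≤ u z)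
    (hbd : ∀ z ∈ ball (0:ℂ) 1, z ≠ 0 → u z ≤ C * |z.im| ^ (-m)) :
    ∃ C' : ℝ, 0 < C' ∧ ∀ z ∈ ball (0:ℂ) 1, z ≠ 0 → u z ≤ C' * ‖z‖ ^ (-m) := by
  by_cases hm0 : m = 0
  · subst hm0
    refine ⟨C, hC, fun z hz hz0 => ?_⟩
    have := hbd z hz hz0
    simpa using this
  · have hm' : 0 < m := hm.lt_of_ne (Ne.symm hm0)
    have hKcomp : IsCompact (closedBall (0:ℂ) 1 \ ball 0 (1/4)) :=
      (isCompact_closedBall _ _).diff isOpen_ball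
    have hKsub : closedBall (0:ℂ) 1 \ ball 0 (1/4) ⊆ U \ {0} := by
      rintro x ⟨hx1, hx2⟩
      refine ⟨hU1 hx1, fun h0 => hx2 ?_⟩
      simp only [mem_singleton_iff] at h0
      rw [h0]
      exact mem_ball_self (by norm_num)
    obtain ⟨B, hB⟩ := domar_usc_bdd hsub.1 hKcomp hKsub
    have h1K : (1:ℂ) ∈ closedBall (0:ℂ) 1 \ ball 0 (1/4) := by
      constructor
      · rw [mem_closedBall, Complex.dist_eq, sub_zero]; simp
      · rw [mem_ball, Complex.dist_eq, sub_zero]; simp; norm_num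
    have hB0 : 0 ≤ B := le_trans (hpos 1 (hKsub h1K)) (hB 1 h1K)
    set q := ((1:ℝ)/2) ^ (1/m : ℝ) with hqdef
    have hq0 : 0 < q := Real.rpow_pos_of_pos (by norm_num) _
    have hq1 : q < 1 := Real.rpow_lt_one (by norm_num) (by norm_num) (by positivity)
    set C' := max (B+1) (2*C * (2048/(1-q)) ^ (m:ℝ)) with hC'def
    have hC'pos : 0 < C' := lt_of_lt_of_le (by linarith) (le_max_left _ _)
    refine ⟨C', hC'pos, fun z hz hz0 => ?_⟩
    have hzlt : ‖z‖ < 1 := by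
      have := mem_ball.1 hz
      rwa [Complex.dist_eq, sub_zero] at this
    have haz0 : 0 < ‖z‖ := norm_pos_iff.mpr hz0
    by_cases hz4 : (1:ℝ)/4 ≤ ‖z‖
    · have hzK : z ∈ closedBall (0:ℂ) 1 \ ball 0 (1/4) :=
        ⟨ball_subset_closedBall hz, by
          rw [mem_ball, Complex.dist_eq, sub_zero]; exact not_lt.2 hz4⟩
      have h2 : (1:ℝ) ≤ ‖z‖ ^ (-m) := by
        have := Real.rpow_le_rpow_of_exponent_ge haz0 hzlt.le
          (neg_nonpos.2 hm : -m ≤ (0:ℝ))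
        rwa [Real.rpow_zero] at this
      calc u z ≤ B := hB z hzK
        _ ≤ C' * 1 := by rw [mul_one]; exact le_trans (by linarith) (le_max_left _ _)
        _ ≤ C' * ‖z‖ ^ (-m) := mul_le_mul_of_nonneg_left h2 hC'pos.le
    · push_neg at hz4
      by_contra hcon
      push_neg at hcon
      set az := ‖z‖ with hazdef
      set M := C' * az ^ (-m : ℝ) with hMdef
      have hM0 : 0 < M := mul_pos hC'pos (Real.rpow_pos_of_pos haz0 _)
      have h1q : (0:ℝ) < 1 - q := by linarith
      have hr0az : 256 * (2*C/M) ^ (1/m : ℝ) ≤ (az/8) * (1-q) := by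
        have hMq : 2*C/M = (2*C/C') * az ^ (m : ℝ) := by
          rw [hMdef, Real.rpow_neg haz0.le]
          have hne : az ^ (m:ℝ) ≠ 0 := ne_of_gt (Real.rpow_pos_of_pos haz0 _)
          field_simp
        have hCC' : (2*C/C') ^ (1/m : ℝ) ≤ (1-q)/2048 := by
          have hX : (0:ℝ) < (2048/(1-q)) ^ (m:ℝ) := Real.rpow_pos_of_pos (div_pos (by norm_num) h1q) _
          have hle : 2*C/C' ≤ ((1-q)/2048) ^ (m:ℝ) := by
            have h1 : 2*C * (2048/(1-q))^(m:ℝ) ≤ C' := le_max_right _ _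
            have h2 : ((1-q)/2048) ^ (m:ℝ) = ((2048/(1-q))^(m:ℝ))⁻¹ := by
              rw [← Real.inv_rpow (le_of_lt (div_pos (by norm_num) h1q)), inv_div]
            have h3 : 2*C/C' ≤ 2*C/(2*C * (2048/(1-q))^(m:ℝ)) :=
              div_le_div_of_nonneg_left (by linarith) (mul_pos (by linarith) hX) h1
            have h4 : 2*C/(2*C * (2048/(1-q))^(m:ℝ)) = ((2048/(1-q))^(m:ℝ))⁻¹ := by
              field_simp
            rw [h2]
            rw [h4] at h3
            exact h3
          calc (2*C/C') ^ (1/m:ℝ)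
              ≤ (((1-q)/2048) ^ (m:ℝ)) ^ (1/m:ℝ) :=
                Real.rpow_le_rpow (div_nonneg (by linarith) hC'pos.le) hle
                  (one_div_nonneg.2 hm)
            _ = (1-q)/2048 := by
                rw [← Real.rpow_mul (div_nonneg h1q.le (by norm_num)), mul_one_div,
                  div_self (ne_of_gt hm'), Real.rpow_one]
        have hmul : (2*C/M) ^ (1/m:ℝ) = (2*C/C') ^ (1/m:ℝ) * az := by
          rw [hMq, Real.mul_rpow (div_nonneg (by linarith) hC'pos.le)
            (Real.rpow_nonneg haz0.le _),
            ← Real.rpow_mul haz0.le, mul_one_div, div_self (ne_of_gt hm'), Real.rpow_one]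
        calc 256 * (2*C/M) ^ (1/m:ℝ) = 256 * ((2*C/C') ^ (1/m:ℝ) * az) := by rw [hmul]
          _ ≤ 256 * ((1-q)/2048 * az) :=
              mul_le_mul_of_nonneg_left
                (mul_le_mul_of_nonneg_right hCC' haz0.le) (by norm_num)
          _ = (az/8) * (1-q) := by ring
      have hkey : ∀ n : ℕ, ∃ w : ℂ, dist w z ≤ (az/8) * (1 - q^n) ∧ 2^n * M ≤ u w := by
        intro n
        induction n with
        | zero => exact ⟨z, by simp, by rw [pow_zero, one_mul]; exact hcon.le⟩
        | succ n ih =>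
          obtain ⟨w, hw1, hw2⟩ := ih
          have hqn : (0:ℝ) ≤ q^n := pow_nonneg hq0.le _
          have hMn : (0:ℝ) < 2^n * M := by positivity
          have hrn : 256 * (2*C/(2^n * M)) ^ (1/m:ℝ) ≤ (az/8) * (1-q) * q^n := by
            have h1 : (2*C/(2^n * M)) = (2*C/M) * ((1:ℝ)/2)^n := by
              field_simp; rw [← mul_pow]; norm_num
            have h3 : (2*C/(2^n*M)) ^ (1/m:ℝ) = (2*C/M)^(1/m:ℝ) * q^n := by
              rw [h1, Real.mul_rpow (div_nonneg (by linarith) hM0.le) (by positivity)]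
              congr 1
              rw [← Real.rpow_natCast ((1:ℝ)/2) n, ← Real.rpow_natCast q n, hqdef,
                ← Real.rpow_mul (by norm_num), ← Real.rpow_mul (by norm_num), mul_comm]
            calc 256 * (2*C/(2^n*M)) ^ (1/m:ℝ)
                = (256 * (2*C/M)^(1/m:ℝ)) * q^n := by rw [h3]; ring
              _ ≤ ((az/8)*(1-q)) * q^n := mul_le_mul_of_nonneg_right hr0az hqn
              _ = (az/8)*(1-q)*q^n := by ring
          have hrnpos : 0 < 256 * (2*C/(2^n * M)) ^ (1/m:ℝ) := by
            have := Real.rpow_pos_of_pos (div_pos (mul_pos two_pos hC) hMn) (1/m:ℝ)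
            linarith
          have hdz0 : dist z 0 = az := by rw [Complex.dist_eq, sub_zero]
          have hballn : closedBall w (256 * (2*C/(2^n * M)) ^ (1/m:ℝ)) ⊆
              ball (0:ℂ) 1 \ {0} := by
            intro x hx
            have hxw := mem_closedBall.1 hx
            have htri := dist_triangle x w z
            have hdxz : dist x z ≤ az/8 := by
              have h5 : dist x z ≤ (az/8)*(1-q)*q^n + (az/8)*(1-q^n) := by linarith
              nlinarith [mul_nonneg hq0.le hqn, haz0.le]
            constructor
            · rw [mem_ball]
              have h5 := dist_triangle x z 0
              rw [hdz0] at h5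
              have : dist x 0 ≤ az/8 + az := by linarith
              linarith
            · intro hx0
              simp only [mem_singleton_iff] at hx0
              rw [hx0, dist_comm, hdz0] at hdxz
              linarith
          obtain ⟨z₁, hz₁d, hz₁u⟩ :=
            domar_step U hU1 u C m hC hm' hsub hbd w (2^n*M) hMn hw2 hballn
          refine ⟨z₁, ?_, ?_⟩
          · have htri := dist_triangle z₁ w z
            rw [hz₁d] at htri
            have h5 : dist z₁ z ≤ (az/8)*(1-q)*q^n + (az/8)*(1-q^n) := by linarith
            have heq : (az/8)*(1-q)*q^n + (az/8)*(1-q^n) = (az/8)*(1-q^(n+1)) := by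
              rw [pow_succ]; ring
            linarith
          · calc (2:ℝ)^(n+1) * M = 2*(2^n*M) := by rw [pow_succ]; ring
              _ ≤ u z₁ := hz₁u
      have hdz0 : dist z 0 = az := by rw [Complex.dist_eq, sub_zero]
      have hcb : closedBall z (az/8) ⊆ U \ {0} := by
        intro x hx
        have hxz := mem_closedBall.1 hx
        constructor
        · apply hU1
          rw [mem_closedBall]
          have h5 := dist_triangle x z 0
          rw [hdz0] at h5
          linarith
        · intro hx0
          simp only [mem_singleton_iff] at hx0
          rw [hx0, dist_comm, hdz0] at hxz
          linarith
      obtain ⟨T, hT⟩ := domar_usc_bdd hsub.1 (isCompact_closedBall _ _) hcb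
      obtain ⟨n, hn⟩ := pow_unbounded_of_one_lt (T/M) (one_lt_two (α := ℝ))
      obtain ⟨w, hw1, hw2⟩ := hkey n
      have hwK : w ∈ closedBall z (az/8) := by
        rw [mem_closedBall]
        have hqn : (0:ℝ) ≤ q^n := pow_nonneg hq0.le _
        nlinarith [haz0.le]
      have h7 := hT w hwK
      have h8 : T < 2^n * M := by
        rw [div_lt_iff₀ hM0] at hn
        linarith
      linarith
end
end

section
/- Let X be a complex Banach space, let c ≥ 0, and let f : ℂ → X be an entire (everywhere holomorphic) function satisfying ‖f(z)‖ ≤ c/|Re z| for every z ∈ ℂ with Re z ≠ 0. Then f = 0. -/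
noncomputable section

open Complex Metric

/-- Key estimate: for `R` large compared to `|w|`, `‖f w‖ ≤ 8c/R`. -/
theorem entire_key_bound (X : Type*) [NormedAddCommGroup X] [NormedSpace ℂ X]
    [CompleteSpace X] (c : ℝ) (hc : 0 ≤ c) (f : ℂ → X)
    (hf : Differentiable ℂ f)
    (hbound : ∀ z : ℂ, z.re ≠ 0 → ‖f z‖ ≤ c / |z.re|) (w : ℂ) (R : ℝ)
    (hR : 2 * ‖w‖ + 2 ≤ R) : ‖f w‖ ≤ 8 * c / R := by
  set a := ‖w‖ with ha_def
  have ha : 0 ≤ a := norm_nonneg w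
  have hR0 : (0:ℝ) < R := lt_of_lt_of_le (by positivity) hR
  have haR : a < R := by linarith
  set g : ℂ → X := fun z => (z ^ 2 + (R:ℂ) ^ 2) • f z with hg_def
  have hg : Differentiable ℂ g := by
    exact ((differentiable_pow 2).add (differentiable_const _)).smul hf
  have hwball : w ∈ ball (0:ℂ) R := by
    rw [mem_ball_zero_iff]
    exact haR
  have hcauchy :=
    (hg.differentiableOn (s := closedBall (0:ℂ) R)).circleIntegral_sub_inv_smul hwball
  have hsphere : ∀ z ∈ sphere (0:ℂ) R, ‖(z - w)⁻¹ • g z‖ ≤ (R - a)⁻¹ * (2 * c * R) := by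
    intro z hz
    rw [mem_sphere_zero_iff_norm] at hz
    have hzabs : ‖z‖ = R := hz
    -- `z ^ 2 + R ^ 2 = z * (2 * z.re)` on the circle
    have hfact : z ^ 2 + (R:ℂ) ^ 2 = z * (2 * (z.re : ℂ)) := by
      have h1 : z * (starRingEnd ℂ) z = ((‖z‖) ^ 2 : ℝ) := by
        rw [Complex.mul_conj, Complex.normSq_eq_norm_sq]
      have h2 : z + (starRingEnd ℂ) z = 2 * (z.re : ℂ) := by
        rw [Complex.add_conj]; push_cast; ring
      calc z ^ 2 + (R:ℂ) ^ 2 = z * z + z * (starRingEnd ℂ) z := by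
            rw [h1, hzabs]; push_cast; ring
        _ = z * (z + (starRingEnd ℂ) z) := by ring
        _ = z * (2 * (z.re : ℂ)) := by rw [h2]
    have hgz : ‖g z‖ ≤ 2 * c * R := by
      have hnorm : ‖g z‖ = (R * (2 * |z.re|)) * ‖f z‖ := by
        simp only [hg_def, norm_smul, hfact, norm_mul, hzabs]
        rw [Complex.norm_real]
        simp
      rcases eq_or_ne z.re 0 with h0 | h0
      · rw [hnorm, h0]
        simp
        positivity
      · have hfz := hbound z h0
        have habs : 0 < |z.re| := abs_pos.mpr h0
        rw [hnorm]
        calc (R * (2 * |z.re|)) * ‖f z‖ ≤ (R * (2 * |z.re|)) * (c / |z.re|) := by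
              apply mul_le_mul_of_nonneg_left hfz
              positivity
          _ = 2 * c * R * (|z.re| / |z.re|) := by ring
          _ = 2 * c * R := by rw [div_self habs.ne', mul_one]
    have hzw : R - a ≤ ‖z - w‖ := by
      have := norm_sub_norm_le z w
      simpa [hzabs, ha_def] using this
    have hzw0 : (0:ℝ) < R - a := by linarith
    rw [norm_smul]
    have hinv : ‖(z - w)⁻¹‖ ≤ (R - a)⁻¹ := by
      rw [norm_inv]
      exact inv_anti₀ hzw0 (by simpa using hzw)
    exact mul_le_mul hinv hgz (norm_nonneg _) (by positivity)
  have hint : ‖∮ z in C(0, R), (z - w)⁻¹ • g z‖ ≤ 2 * Real.pi * R * ((R - a)⁻¹ * (2 * c * R)) :=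
    circleIntegral.norm_integral_le_of_norm_le_const hR0.le hsphere
  rw [hcauchy] at hint
  have hpi := Real.pi_pos
  have hnorm2 : ‖(2 * ↑Real.pi * Complex.I : ℂ) • g w‖ = 2 * Real.pi * ‖g w‖ := by
    rw [norm_smul]
    simp [abs_of_pos hpi, mul_assoc]
  rw [hnorm2] at hint
  -- so ‖g w‖ ≤ R * ((R - a)⁻¹ * (2 c R))
  have hgw : ‖g w‖ ≤ R * ((R - a)⁻¹ * (2 * c * R)) := by
    have h2pi : (0:ℝ) < 2 * Real.pi := by positivity
    nlinarith [hint]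
  -- (R - a)⁻¹ ≤ 2 / R since R - a ≥ R / 2
  have hhalf : R / 2 ≤ R - a := by linarith
  have hinv2 : (R - a)⁻¹ ≤ 2 / R := by
    rw [show (2:ℝ) / R = (R / 2)⁻¹ by rw [inv_div]]
    exact inv_anti₀ (by linarith) hhalf
  have hgw2 : ‖g w‖ ≤ 4 * c * R := by
    calc ‖g w‖ ≤ R * ((R - a)⁻¹ * (2 * c * R)) := hgw
      _ ≤ R * ((2 / R) * (2 * c * R)) := by
          apply mul_le_mul_of_nonneg_left _ hR0.le
          apply mul_le_mul_of_nonneg_right hinv2 (by positivity)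
      _ = 4 * c * R * (R / R) := by ring
      _ = 4 * c * R := by rw [div_self hR0.ne', mul_one]
  -- lower bound on ‖g w‖
  have hlow : (R ^ 2 - a ^ 2) * ‖f w‖ ≤ ‖g w‖ := by
    have h1 : ‖g w‖ = ‖w ^ 2 + (R:ℂ) ^ 2‖ * ‖f w‖ := by
      simp [hg_def, norm_smul]
    have h2 : R ^ 2 - a ^ 2 ≤ ‖w ^ 2 + (R:ℂ) ^ 2‖ := by
      have h3 : ‖(R:ℂ) ^ 2‖ - ‖w ^ 2‖ ≤
          ‖(R:ℂ) ^ 2 + w ^ 2‖ := by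
        have := norm_sub_norm_le ((R:ℂ) ^ 2) (-(w ^ 2))
        simpa [sub_neg_eq_add] using this
      have h4 : ‖(R:ℂ) ^ 2‖ = R ^ 2 := by
        rw [norm_pow, Complex.norm_real, Real.norm_eq_abs, abs_of_pos hR0]
      have h5 : ‖w ^ 2‖ = a ^ 2 := by rw [norm_pow]
      rw [h4, h5] at h3
      rwa [show w ^ 2 + (R:ℂ) ^ 2 = (R:ℂ) ^ 2 + w ^ 2 by ring]
    rw [h1]
    exact mul_le_mul_of_nonneg_right h2 (norm_nonneg _)
  have hR2 : R ^ 2 / 2 ≤ R ^ 2 - a ^ 2 := by nlinarith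
  have hfw : R ^ 2 / 2 * ‖f w‖ ≤ 4 * c * R := by
    calc R ^ 2 / 2 * ‖f w‖ ≤ (R ^ 2 - a ^ 2) * ‖f w‖ :=
          mul_le_mul_of_nonneg_right hR2 (norm_nonneg _)
      _ ≤ ‖g w‖ := hlow
      _ ≤ 4 * c * R := hgw2
  rw [le_div_iff₀ hR0]
  nlinarith [hfw]

/-- An entire Banach-space-valued function satisfying `‖f(z)‖ ≤ c/|Re z|` off the imaginary
axis vanishes identically. -/
theorem entire_vanishes_of_re_bound (X : Type*) [NormedAddCommGroup X] [NormedSpace ℂ X]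
    [CompleteSpace X] (c : ℝ) (hc : 0 ≤ c) (f : ℂ → X)
    (hf : Differentiable ℂ f)
    (hbound : ∀ z : ℂ, z.re ≠ 0 → ‖f z‖ ≤ c / |z.re|) :
    f = 0 := by
  funext w
  rw [Pi.zero_apply, ← norm_le_zero_iff]
  have key : ∀ ε > 0, ‖f w‖ ≤ 0 + ε := by
    intro ε hε
    rw [zero_add]
    set R : ℝ := max (2 * ‖w‖ + 2) (8 * c / ε) with hR_def
    have hR1 : 2 * ‖w‖ + 2 ≤ R := le_max_left _ _
    have hR2 : 8 * c / ε ≤ R := le_max_right _ _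
    have hR0 : (0:ℝ) < R := lt_of_lt_of_le (by positivity) hR1
    have h := entire_key_bound X c hc f hf hbound w R hR1
    refine h.trans ?_
    rw [div_le_iff₀ hR0]
    have : 8 * c ≤ ε * R := by
      rw [div_le_iff₀ hε] at hR2
      linarith [hR2]
    linarith
  exact le_of_forall_pos_le_add key
end
end

section
/- Let p ≥ 1 and let u be a non-negative subharmonic function on the open unit disc 𝔻 such that the L^p means satisfy ‖u(re^{i·})‖_{L^p[0,2π]} = o((1-r)^{-2+1/p}) as r → 1-. Then M_r(u) = o((1-r)^{-2}) as r → 1-. -/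
open Set Filter Metric MeasureTheory

noncomputable section


lemma usc_isOpen_lt_s17 {u : ℂ → ℝ} (hu : UpperSemicontinuousOn u (ball (0:ℂ) 1)) (a : ℝ) :
    IsOpen {w | w ∈ ball (0:ℂ) 1 ∧ u w < a} := by
  rw [isOpen_iff_mem_nhds]
  rintro w ⟨hw1, hw2⟩
  have h := hu w hw1 a hw2
  rw [nhdsWithin_eq_nhds.2 (isOpen_ball.mem_nhds hw1)] at h
  filter_upwards [h, isOpen_ball.mem_nhds hw1] with x hx1 hx2
  exact ⟨hx2, hx1⟩

lemma usc_measurable_indicator_s17 {u : ℂ → ℝ} (hu : UpperSemicontinuousOn u (ball (0:ℂ) 1)) :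
    Measurable ((ball (0:ℂ) 1).indicator u) := by
  apply measurable_of_Iio
  intro a
  have h1 := (usc_isOpen_lt_s17 hu a).measurableSet
  by_cases ha : (0:ℝ) < a
  · have : (ball (0:ℂ) 1).indicator u ⁻¹' Iio a
        = {w | w ∈ ball (0:ℂ) 1 ∧ u w < a} ∪ (ball (0:ℂ) 1)ᶜ := by
      ext w
      by_cases hw : w ∈ ball (0:ℂ) 1 <;>
        simp only [mem_preimage, Set.indicator_of_mem, Set.indicator_of_notMem, hw, mem_Iio,
          mem_union, mem_setOf_eq, mem_compl_iff, not_true, not_false_iff] <;> tauto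
    rw [this]; exact h1.union measurableSet_ball.compl
  · have : (ball (0:ℂ) 1).indicator u ⁻¹' Iio a = {w | w ∈ ball (0:ℂ) 1 ∧ u w < a} := by
      ext w
      by_cases hw : w ∈ ball (0:ℂ) 1 <;>
        simp only [mem_preimage, Set.indicator_of_mem, Set.indicator_of_notMem, hw, mem_Iio,
          mem_union, mem_setOf_eq, mem_compl_iff, not_true, not_false_iff] <;> tauto
    rw [this]; exact h1

lemma usc_bound {u : ℂ → ℝ} (hu : UpperSemicontinuousOn u (ball (0:ℂ) 1)) {c : ℝ} (hc : c < 1) :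
    ∃ M : ℝ, 0 ≤ M ∧ ∀ w ∈ closedBall (0:ℂ) c, u w ≤ M := by
  have hK : IsCompact (closedBall (0:ℂ) c) := isCompact_closedBall _ _
  have hKB : closedBall (0:ℂ) c ⊆ ball 0 1 := closedBall_subset_ball hc
  have hcover : closedBall (0:ℂ) c ⊆ ⋃ n : ℕ, {w | w ∈ ball (0:ℂ) 1 ∧ u w < n} := by
    intro w hw
    obtain ⟨n, hn⟩ := exists_nat_gt (u w)
    exact mem_iUnion.2 ⟨n, hKB hw, hn⟩
  obtain ⟨t, ht⟩ := hK.elim_finite_subcover _ (fun n : ℕ => usc_isOpen_lt_s17 hu n) hcover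
  refine ⟨((t.sup id : ℕ) : ℝ), Nat.cast_nonneg _, fun w hw => ?_⟩
  obtain ⟨n, hn, hw2⟩ := mem_iUnion₂.1 (ht hw)
  calc u w ≤ n := hw2.2.le
  _ ≤ ((t.sup id : ℕ) : ℝ) := Nat.cast_le.2 (Finset.le_sup (f := id) hn)


lemma circle_periodic (g : ℂ → ℝ) (c : ℂ) (ρ : ℝ) :
    Function.Periodic (fun φ : ℝ => g (c + (ρ:ℂ) * Complex.exp ((φ:ℂ) * Complex.I)))
      (2*Real.pi) := by
  intro x
  have h : Complex.exp ((↑(x + 2*Real.pi):ℂ) * Complex.I) = Complex.exp ((x:ℂ)*Complex.I) := by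
    push_cast
    rw [add_mul, Complex.exp_add, Complex.exp_two_pi_mul_I, mul_one]
  simp only [h]

lemma circle_int_shift (g : ℂ → ℝ) (c : ℂ) (ρ : ℝ) :
    ∫ φ in Ioo (-Real.pi) Real.pi, g (c + (ρ:ℂ) * Complex.exp ((φ:ℂ) * Complex.I))
      = ∫ φ in Ioc (0:ℝ) (2*Real.pi), g (c + (ρ:ℂ) * Complex.exp ((φ:ℂ) * Complex.I)) := by
  have h2 := (circle_periodic g c ρ).intervalIntegral_add_eq (-Real.pi) 0
  rw [zero_add] at h2
  have h3 : -Real.pi + 2*Real.pi = Real.pi := by ring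
  rw [h3] at h2
  rw [← integral_Ioc_eq_integral_Ioo,
    ← intervalIntegral.integral_of_le (neg_le_self Real.pi_pos.le), h2,
    intervalIntegral.integral_of_le (by positivity)]

lemma jensen_circle {f : ℝ → ℝ} (hm : Measurable f) (h0 : ∀ x, 0 ≤ f x) {M : ℝ}
    (hM : ∀ x, f x ≤ M) {p : ℝ} (hp : 1 ≤ p) :
    (∫ φ in Ioc (0:ℝ) (2*Real.pi), f φ) ^ p
      ≤ (2*Real.pi) ^ (p-1) * ∫ φ in Ioc (0:ℝ) (2*Real.pi), f φ ^ p := by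
  rcases eq_or_lt_of_le hp with h1 | h1
  · rw [← h1]
    simp [Real.rpow_one]
  set μ := volume.restrict (Ioc (0:ℝ) (2*Real.pi)) with hμdef
  haveI : IsFiniteMeasure μ := ⟨by rw [Measure.restrict_apply_univ]; exact measure_Ioc_lt_top⟩
  have hpq : p.HolderConjugate (p/(p-1)) := Real.HolderConjugate.conjExponent h1
  have hf1 : MemLp f (ENNReal.ofReal p) μ :=
    (memLp_top_of_bound hm.aestronglyMeasurable M (ae_of_all _ fun x => by
      rw [Real.norm_of_nonneg (h0 x)]; exact hM x)).mono_exponent le_top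
  have hg1 : MemLp (fun _ : ℝ => (1:ℝ)) (ENNReal.ofReal (p/(p-1))) μ := memLp_const 1
  have key := integral_mul_le_Lp_mul_Lq_of_nonneg hpq (ae_of_all _ h0)
      (ae_of_all _ fun _ => zero_le_one) hf1 hg1
  simp only [mul_one, Real.one_rpow] at key
  have hμ1 : ∫ _ : ℝ, (1:ℝ) ∂μ = 2*Real.pi := by
    rw [integral_const, smul_eq_mul, mul_one, measureReal_def, Measure.restrict_apply_univ, Real.volume_Ioc,
      sub_zero, ENNReal.toReal_ofReal (by positivity)]
  rw [hμ1] at key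
  have hIp : 0 ≤ ∫ φ, f φ ^ p ∂μ := integral_nonneg fun x => Real.rpow_nonneg (h0 x) p
  have hI : 0 ≤ ∫ φ, f φ ∂μ := integral_nonneg h0
  have hp0 : p ≠ 0 := by linarith
  have hp10 : p - 1 ≠ 0 := by linarith
  have e1 : ((∫ φ, f φ ^ p ∂μ) ^ (1/p)) ^ p = ∫ φ, f φ ^ p ∂μ := by
    rw [← Real.rpow_mul hIp, one_div, inv_mul_cancel₀ hp0, Real.rpow_one]
  have e2 : ((2*Real.pi) ^ (1/(p/(p-1)))) ^ p = (2*Real.pi) ^ (p-1) := by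
    rw [← Real.rpow_mul (by positivity)]
    congr 1
    field_simp
  calc (∫ φ, f φ ∂μ) ^ p ≤ ((∫ φ, f φ ^ p ∂μ) ^ (1/p) * (2*Real.pi) ^ (1/(p/(p-1)))) ^ p :=
        Real.rpow_le_rpow hI key (by linarith)
    _ = (2*Real.pi) ^ (p-1) * ∫ φ, f φ ^ p ∂μ := by
        rw [Real.mul_rpow (Real.rpow_nonneg hIp _) (Real.rpow_nonneg (by positivity) _), e1, e2,
          mul_comm]


lemma polar_disc (G : ℂ → ℝ) (hGm : Measurable G) (M : ℝ) (hGb : ∀ w, |G w| ≤ M)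
    {R : ℝ} (hR : 0 < R) (c : ℂ) :
    (∫ w in closedBall c R, G w)
      = (∫ ρ in Ioc (0:ℝ) R, ρ * ∫ φ in Ioo (-Real.pi) Real.pi,
          G (c + (ρ:ℂ) * Complex.exp ((φ:ℂ) * Complex.I)))
    ∧ IntegrableOn (fun ρ : ℝ => ρ * ∫ φ in Ioo (-Real.pi) Real.pi,
          G (c + (ρ:ℂ) * Complex.exp ((φ:ℂ) * Complex.I))) (Ioc (0:ℝ) R) := by
  have hM0 : 0 ≤ M := le_trans (abs_nonneg _) (hGb 0)
  set H : ℂ → ℝ := (closedBall (0:ℂ) R).indicator (fun w => G (c + w)) with hHdef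
  have hHm : Measurable H :=
    (hGm.comp (measurable_id.const_add c)).indicator measurableSet_closedBall
  have hHb : ∀ w, |H w| ≤ M := by
    intro w
    by_cases hw : w ∈ closedBall (0:ℂ) R
    · rw [hHdef, Set.indicator_of_mem hw]; exact hGb _
    · rw [hHdef, Set.indicator_of_notMem hw]; simpa using hM0
  set F : ℝ × ℝ → ℂ := fun pr => (pr.1 : ℂ) * Complex.exp ((pr.2:ℂ) * Complex.I) with hFdef
  have hFc : Continuous F := by
    apply Continuous.mul
    · exact Complex.continuous_ofReal.comp continuous_fst
    · exact Complex.continuous_exp.comp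
        ((Complex.continuous_ofReal.comp continuous_snd).mul continuous_const)
  have hsymm : ∀ pr : ℝ × ℝ, Complex.polarCoord.symm pr = F pr := by
    intro pr
    rw [Complex.polarCoord_symm_apply]
    show _ = (pr.1:ℂ) * Complex.exp ((pr.2:ℂ) * Complex.I)
    rw [Complex.exp_mul_I, Complex.ofReal_cos, Complex.ofReal_sin]
  have habs : ∀ pr : ℝ × ℝ, ‖F pr‖ = |pr.1| := by
    intro pr
    rw [hFdef]
    simp [Complex.norm_exp_ofReal_mul_I]
  set rect : Set (ℝ × ℝ) := (Ioc (0:ℝ) R) ×ˢ (Ioo (-Real.pi) Real.pi) with hrectdef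
  have hrectm : MeasurableSet rect := measurableSet_Ioc.prod measurableSet_Ioo
  have hrectsub : rect ⊆ polarCoord.target := by
    rintro ⟨ρ, φ⟩ ⟨h1, h2⟩
    exact ⟨h1.1, h2⟩
  have htargetm : MeasurableSet polarCoord.target :=
    polarCoord.open_target.measurableSet
  -- integrability on the rectangle
  have hfm : Measurable fun pr : ℝ × ℝ => pr.1 * H (F pr) :=
    measurable_fst.mul (hHm.comp hFc.measurable)
  have hrectvol : volume rect ≠ ⊤ := by
    rw [hrectdef, Measure.volume_eq_prod, Measure.prod_prod]
    exact (ENNReal.mul_lt_top measure_Ioc_lt_top measure_Ioo_lt_top).ne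
  have hint : IntegrableOn (fun pr : ℝ × ℝ => pr.1 * H (F pr)) rect := by
    apply Measure.integrableOn_of_bounded hrectvol hfm.aestronglyMeasurable (M := R * M)
    filter_upwards [ae_restrict_mem hrectm] with pr hpr
    rw [Real.norm_eq_abs, abs_mul]
    apply mul_le_mul _ (hHb _) (abs_nonneg _) hR.le
    rw [abs_of_pos hpr.1.1]
    exact hpr.1.2
  -- inner integral identification
  have hinner : ∀ ρ ∈ Ioc (0:ℝ) R,
      (∫ φ in Ioo (-Real.pi) Real.pi, (ρ * H (F (ρ, φ))))
        = ρ * ∫ φ in Ioo (-Real.pi) Real.pi, G (c + (ρ:ℂ) * Complex.exp ((φ:ℂ) * Complex.I)) := by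
    intro ρ hρ
    rw [integral_const_mul]
    congr 1
    apply setIntegral_congr_fun measurableSet_Ioo
    intro φ _
    have hmem : F (ρ, φ) ∈ closedBall (0:ℂ) R := by
      rw [mem_closedBall_zero_iff, habs]
      simp only [abs_of_pos hρ.1]
      exact hρ.2
    show H (F (ρ, φ)) = _
    rw [hHdef, Set.indicator_of_mem hmem]
  constructor
  · calc ∫ w in closedBall c R, G w = ∫ w, (closedBall c R).indicator G w :=
          (integral_indicator measurableSet_closedBall).symm
    _ = ∫ w, H w := by
        rw [← integral_add_left_eq_self ((closedBall c R).indicator G) c]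
        refine integral_congr_ae (ae_of_all _ fun x => ?_)
        show (closedBall c R).indicator G (c + x) = H x
        have hiff : c + x ∈ closedBall c R ↔ x ∈ closedBall (0:ℂ) R := by
          rw [mem_closedBall, mem_closedBall, dist_self_add_left, dist_zero_right]
        by_cases hx : x ∈ closedBall (0:ℂ) R
        · rw [Set.indicator_of_mem (hiff.2 hx), hHdef, Set.indicator_of_mem hx]
        · rw [Set.indicator_of_notMem (fun hc => hx (hiff.1 hc)), hHdef,
            Set.indicator_of_notMem hx]
    _ = ∫ pr in polarCoord.target, pr.1 • H (Complex.polarCoord.symm pr) :=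
        (Complex.integral_comp_polarCoord_symm H).symm
    _ = ∫ pr in polarCoord.target, rect.indicator (fun pr => pr.1 * H (F pr)) pr := by
        apply setIntegral_congr_fun htargetm
        intro pr hpr
        show pr.1 • H (Complex.polarCoord.symm pr) = rect.indicator (fun pr => pr.1 * H (F pr)) pr
        rw [hsymm pr, smul_eq_mul]
        by_cases hmem : pr ∈ rect
        · rw [Set.indicator_of_mem hmem]
        · rw [Set.indicator_of_notMem hmem]
          have h1 : pr.1 ∉ Ioc (0:ℝ) R := by
            intro hc1
            exact hmem ⟨hc1, hpr.2⟩
          have h2 : R < pr.1 := by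
            rcases lt_or_ge R pr.1 with h | h
            · exact h
            · exact absurd ⟨hpr.1, h⟩ h1
          have : H (F pr) = 0 := by
            rw [hHdef]
            apply Set.indicator_of_notMem
            rw [mem_closedBall_zero_iff, habs]
            intro hcon
            have := lt_of_lt_of_le h2 (le_trans (le_abs_self _) hcon)
            linarith
          rw [this, mul_zero]
    _ = ∫ pr in polarCoord.target ∩ rect, pr.1 * H (F pr) := setIntegral_indicator hrectm
    _ = ∫ pr in rect, pr.1 * H (F pr) := by
        rw [inter_eq_self_of_subset_right hrectsub]
    _ = ∫ ρ in Ioc (0:ℝ) R, ∫ φ in Ioo (-Real.pi) Real.pi, (ρ * H (F (ρ, φ))) := by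
        rw [hrectdef, Measure.volume_eq_prod]
        apply setIntegral_prod
        rw [← Measure.volume_eq_prod]
        exact hint
    _ = ∫ ρ in Ioc (0:ℝ) R, ρ * ∫ φ in Ioo (-Real.pi) Real.pi,
          G (c + (ρ:ℂ) * Complex.exp ((φ:ℂ) * Complex.I)) :=
        setIntegral_congr_fun measurableSet_Ioc hinner
  · have h1 : IntegrableOn (fun pr : ℝ × ℝ => pr.1 * H (F pr)) rect
        ((volume : Measure ℝ).prod (volume : Measure ℝ)) := by
      rw [← Measure.volume_eq_prod]
      exact hint
    have h1' : Integrable (fun pr : ℝ × ℝ => pr.1 * H (F pr))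
        ((volume.restrict (Ioc (0:ℝ) R)).prod (volume.restrict (Ioo (-Real.pi) Real.pi))) := by
      rw [Measure.prod_restrict]
      exact h1
    have h2 := h1'.integral_prod_left
    apply h2.congr
    filter_upwards [ae_restrict_mem measurableSet_Ioc] with ρ hρ
    exact (hinner ρ hρ)


/-- If the `L^p` means of a non-negative subharmonic function `u` on the unit disc satisfy
`‖u(re^{i⬝})‖_p = o((1-r)^{-2+1/p})` as `r → 1-`, then `M_r(u) = o((1-r)^{-2})`. -/
theorem sup_growth_from_Lp_growth (p : ℝ) (hp : 1 ≤ p) (u : ℂ → ℝ)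
    (hsub : IsSubharmonicOn u (ball (0:ℂ) 1))
    (hpos : ∀ z ∈ ball (0:ℂ) 1, 0 ≤ u z)
    (hLp : ∀ ε > (0:ℝ), ∀ᶠ r : ℝ in nhdsWithin 1 (Iio 1),
      (∫ φ in (0:ℝ)..(2 * Real.pi),
          |u ((r : ℂ) * Complex.exp ((φ : ℂ) * Complex.I))| ^ p) ^ (1 / p) ≤
        ε * (1 - r) ^ (-2 + 1 / p)) :
    ∀ ε > (0:ℝ), ∀ᶠ r : ℝ in nhdsWithin 1 (Iio 1),
      ∀ φ : ℝ, |u ((r : ℂ) * Complex.exp ((φ : ℂ) * Complex.I))| ≤ ε * ((1 - r) ^ 2)⁻¹ := by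
  intro ε hε
  have hp0 : p ≠ 0 := by linarith
  have hppos : 0 < p := by linarith
  have hε8 : (0:ℝ) < ε/8 := by linarith
  have hπ : (0:ℝ) < Real.pi := Real.pi_pos
  obtain ⟨a, haI, haP⟩ := mem_nhdsLT_iff_exists_Ioo_subset.1 (hLp (ε/8) hε8)
  simp only [mem_Iio] at haI
  set a' : ℝ := max a 0 with ha'def
  have ha'0 : 0 ≤ a' := le_max_right _ _
  have ha'1 : a' < 1 := max_lt haI one_pos
  set a₀ : ℝ := (2*a' + 1)/3 with ha₀def
  have ha₀1 : a₀ < 1 := by rw [ha₀def]; linarith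
  rw [eventually_iff]
  apply mem_nhdsLT_iff_exists_Ioo_subset.2 ⟨a₀, ha₀1, ?_⟩
  intro r hr
  simp only [mem_setOf_eq]
  intro φ₀
  -- basic facts about r and δ
  have hr1 : r < 1 := hr.2
  have hra : a₀ < r := hr.1
  have hr0 : 0 < r := lt_of_le_of_lt (by rw [ha₀def]; linarith : (0:ℝ) ≤ a₀) hra
  set δ : ℝ := (1 - r)/2 with hδdef
  have hδ : 0 < δ := by rw [hδdef]; linarith
  have hrd1 : r + δ < 1 := by rw [hδdef]; linarith
  have hrdpos : 0 < r + δ := by linarith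
  have hannlo : a' < r - δ := by rw [hδdef]; rw [ha₀def] at hra; linarith
  have hrd0 : 0 < r - δ := lt_of_le_of_lt ha'0 hannlo
  -- the measurable extension of u
  set ub : ℂ → ℝ := (ball (0:ℂ) 1).indicator u with hubdef
  have hub : Measurable ub := usc_measurable_indicator_s17 hsub.1
  have hub0 : ∀ w, 0 ≤ ub w := by
    intro w
    rw [hubdef]
    by_cases hw : w ∈ ball (0:ℂ) 1
    · rw [Set.indicator_of_mem hw]; exact hpos w hw
    · rw [Set.indicator_of_notMem hw]
  have hubu : ∀ w ∈ ball (0:ℂ) 1, ub w = u w := fun w hw => Set.indicator_of_mem hw u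
  obtain ⟨M, hM0, hM⟩ := usc_bound hsub.1 (c := r + δ) hrd1
  have hubM : ∀ w ∈ closedBall (0:ℂ) (r + δ), ub w ≤ M := by
    intro w hw
    by_cases hw1 : w ∈ ball (0:ℂ) 1
    · rw [hubdef, Set.indicator_of_mem hw1]; exact hM w hw
    · rw [hubdef, Set.indicator_of_notMem hw1]; exact hM0
  -- the function q = ub^p and its truncation to the annulus
  set q : ℂ → ℝ := fun w => ub w ^ p with hqdef
  have hq : Measurable q := hub.pow measurable_const
  have hq0 : ∀ w, 0 ≤ q w := fun w => Real.rpow_nonneg (hub0 w) p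
  set A2 : Set ℂ := closedBall (0:ℂ) (r + δ) \ ball (0:ℂ) (r - δ) with hA2def
  have hA2m : MeasurableSet A2 := measurableSet_closedBall.diff measurableSet_ball
  set q1 : ℂ → ℝ := A2.indicator q with hq1def
  have hq1m : Measurable q1 := hq.indicator hA2m
  have hq10 : ∀ w, 0 ≤ q1 w := by
    intro w
    rw [hq1def]
    by_cases hw : w ∈ A2
    · rw [Set.indicator_of_mem hw]; exact hq0 w
    · rw [Set.indicator_of_notMem hw]
  have hq1q : ∀ w, q1 w ≤ q w := fun w => Set.indicator_le_self' (fun w _ => hq0 w) w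
  have hqM : ∀ w ∈ closedBall (0:ℂ) (r + δ), q w ≤ M ^ p := by
    intro w hw
    exact Real.rpow_le_rpow (hub0 w) (hubM w hw) hppos.le
  have hq1b : ∀ w, |q1 w| ≤ M ^ p := by
    intro w
    rw [abs_of_nonneg (hq10 w), hq1def]
    by_cases hw : w ∈ A2
    · rw [Set.indicator_of_mem hw]
      exact hqM w hw.1
    · rw [Set.indicator_of_notMem hw]
      exact Real.rpow_nonneg hM0 p
  -- the point z
  set z : ℂ := (r:ℂ) * Complex.exp ((φ₀:ℂ) * Complex.I) with hzdef
  have habsz : ‖z‖ = r := by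
    rw [hzdef, norm_mul, Complex.norm_real, Real.norm_eq_abs, Complex.norm_exp_ofReal_mul_I, mul_one,
      abs_of_pos hr0]
  have hz1 : z ∈ ball (0:ℂ) 1 := by
    rw [mem_ball_zero_iff, habsz]; linarith
  have huz0 : 0 ≤ u z := hpos z hz1
  -- location of circle points around z
  have hcirc : ∀ (ρ φ : ℝ), 0 < ρ → ρ ≤ δ →
      z + (ρ:ℂ) * Complex.exp ((φ:ℂ) * Complex.I) ∈ A2 ∩ ball (0:ℂ) 1 := by
    intro ρ φ hρ0 hρδ
    have habsρ : ‖(ρ:ℂ) * Complex.exp ((φ:ℂ) * Complex.I)‖ = ρ := by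
      rw [norm_mul, Complex.norm_real, Real.norm_eq_abs, Complex.norm_exp_ofReal_mul_I, mul_one, abs_of_pos hρ0]
    have h1 : ‖z + (ρ:ℂ) * Complex.exp ((φ:ℂ) * Complex.I)‖ ≤ r + δ := by
      calc ‖z + (ρ:ℂ) * Complex.exp ((φ:ℂ) * Complex.I)‖
          ≤ ‖z‖ + ‖(ρ:ℂ) * Complex.exp ((φ:ℂ) * Complex.I)‖ :=
            norm_add_le _ _
        _ ≤ r + δ := by rw [habsz, habsρ]; linarith
    have h2 : r - δ ≤ ‖z + (ρ:ℂ) * Complex.exp ((φ:ℂ) * Complex.I)‖ := by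
      have h0 := norm_add_le (z + (ρ:ℂ) * Complex.exp ((φ:ℂ) * Complex.I))
        (-((ρ:ℂ) * Complex.exp ((φ:ℂ) * Complex.I)))
      rw [add_neg_cancel_right, norm_neg, habsz, habsρ] at h0
      linarith
    refine ⟨⟨?_, ?_⟩, ?_⟩
    · rw [mem_closedBall_zero_iff]; exact h1
    · rw [mem_ball_zero_iff]; push_neg; exact h2
    · rw [mem_ball_zero_iff]; linarith
  -- Step A : the circle sub-mean-value + Jensen estimate
  have stepA : ∀ ρ ∈ Ioc (0:ℝ) δ,
      2 * Real.pi * (u z ^ p)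
        ≤ ∫ φ in Ioo (-Real.pi) Real.pi, q1 (z + (ρ:ℂ) * Complex.exp ((φ:ℂ) * Complex.I)) := by
    intro ρ hρ
    have hρ0 : 0 < ρ := hρ.1
    have hρδ : ρ ≤ δ := hρ.2
    have hcball : closedBall z ρ ⊆ ball (0:ℂ) 1 := by
      intro w hw
      rw [mem_ball_zero_iff]
      calc ‖w‖ = ‖z + (w - z)‖ := by ring_nf
        _ ≤ ‖z‖ + ‖w - z‖ := norm_add_le _ _
        _ ≤ r + ρ := by
            rw [habsz]
            have := mem_closedBall.1 hw
            rw [Complex.dist_eq] at this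
            linarith
        _ < 1 := by linarith
    have hmean := hsub.2 z ρ hρ0 hcball
    set f : ℝ → ℝ := fun φ => ub (z + (ρ:ℂ) * Complex.exp ((φ:ℂ) * Complex.I)) with hfdef
    have hfm : Measurable f := by
      apply hub.comp
      have hcont : Continuous fun x : ℝ => z + (ρ:ℂ) * Complex.exp ((x:ℂ) * Complex.I) :=
        continuous_const.add (continuous_const.mul (Complex.continuous_exp.comp
          (Complex.continuous_ofReal.mul continuous_const)))
      exact hcont.measurable
    have hf0 : ∀ x, 0 ≤ f x := fun x => hub0 _
    have hfM : ∀ x, f x ≤ M := by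
      intro x
      apply hubM
      rw [mem_closedBall_zero_iff]
      have h1 := (hcirc ρ x hρ0 hρδ).1.1
      rw [mem_closedBall_zero_iff] at h1
      exact h1
    have hmean' : u z ≤ (1 / (2 * Real.pi)) * ∫ φ in Ioc (0:ℝ) (2*Real.pi), f φ := by
      rw [← intervalIntegral.integral_of_le (by positivity : (0:ℝ) ≤ 2*Real.pi)]
      calc u z ≤ (1 / (2 * Real.pi)) *
            ∫ φ in (0:ℝ)..(2 * Real.pi), u (z + (ρ : ℂ) * Complex.exp ((φ : ℂ) * Complex.I)) :=
            hmean
        _ = (1 / (2 * Real.pi)) * ∫ φ in (0:ℝ)..(2 * Real.pi), f φ := by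
            congr 1
            apply intervalIntegral.integral_congr
            intro x _
            rw [hfdef]
            exact ((hubu _ (hcirc ρ x hρ0 hρδ).2)).symm
    have hjen := jensen_circle hfm hf0 hfM hp
    have hI0 : 0 ≤ ∫ φ in Ioc (0:ℝ) (2*Real.pi), f φ :=
      setIntegral_nonneg measurableSet_Ioc fun x _ => hf0 x
    have hkey : u z ^ p ≤ (1/(2*Real.pi)) * ∫ φ in Ioc (0:ℝ) (2*Real.pi), f φ ^ p := by
      have h1 : u z ^ p ≤ ((1 / (2 * Real.pi)) * ∫ φ in Ioc (0:ℝ) (2*Real.pi), f φ) ^ p :=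
        Real.rpow_le_rpow huz0 hmean' hppos.le
      have h2 : ((1 / (2 * Real.pi)) * ∫ φ in Ioc (0:ℝ) (2*Real.pi), f φ) ^ p
          = (1/(2*Real.pi)) ^ p * (∫ φ in Ioc (0:ℝ) (2*Real.pi), f φ) ^ p :=
        Real.mul_rpow (by positivity) hI0
      have h3 : (1/(2*Real.pi)) ^ p * (∫ φ in Ioc (0:ℝ) (2*Real.pi), f φ) ^ p
          ≤ (1/(2*Real.pi)) ^ p * ((2*Real.pi) ^ (p-1) * ∫ φ in Ioc (0:ℝ) (2*Real.pi), f φ ^ p) :=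
        mul_le_mul_of_nonneg_left hjen (Real.rpow_nonneg (by positivity) p)
      have h4 : (1/(2*Real.pi)) ^ p * (2*Real.pi) ^ (p-1) = 1/(2*Real.pi) := by
        rw [one_div, Real.inv_rpow (by positivity), ← Real.rpow_neg (by positivity),
          ← Real.rpow_add (by positivity), ← Real.rpow_neg_one (2*Real.pi)]
        congr 1
        ring
      calc u z ^ p ≤ _ := h1
        _ = _ := h2
        _ ≤ _ := h3
        _ = 1/(2*Real.pi) * ∫ φ in Ioc (0:ℝ) (2*Real.pi), f φ ^ p := by rw [← mul_assoc, h4]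
    have hq1f : ∀ x : ℝ, f x ^ p = q1 (z + (ρ:ℂ) * Complex.exp ((x:ℂ) * Complex.I)) := by
      intro x
      rw [hq1def, Set.indicator_of_mem (hcirc ρ x hρ0 hρδ).1, hqdef]
    rw [circle_int_shift q1 z ρ]
    have : ∫ φ in Ioc (0:ℝ) (2*Real.pi), q1 (z + (ρ:ℂ) * Complex.exp ((φ:ℂ) * Complex.I))
        = ∫ φ in Ioc (0:ℝ) (2*Real.pi), f φ ^ p := by
      apply setIntegral_congr_fun measurableSet_Ioc
      intro x _
      exact (hq1f x).symm
    rw [this]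
    rw [div_mul_eq_mul_div, one_mul, le_div_iff₀ (by positivity : (0:ℝ) < 2*Real.pi)] at hkey
    linarith [hkey]
  -- Step B : polar coordinates around z
  obtain ⟨hPz, hPzint⟩ := polar_disc q1 hq1m (M ^ p) hq1b hδ z
  have stepB : 2 * Real.pi * (u z ^ p) * (δ^2/2) ≤ ∫ w in closedBall z δ, q1 w := by
    rw [hPz]
    have hlhs : 2 * Real.pi * (u z ^ p) * (δ^2/2)
        = ∫ ρ in Ioc (0:ℝ) δ, (2 * Real.pi * (u z ^ p)) * ρ := by
      rw [← intervalIntegral.integral_of_le hδ.le, intervalIntegral.integral_const_mul,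
        integral_id]
      ring
    rw [hlhs]
    apply integral_mono_of_nonneg
    · filter_upwards [ae_restrict_mem measurableSet_Ioc] with ρ hρ
      exact mul_nonneg (mul_nonneg (by positivity) (Real.rpow_nonneg huz0 p)) hρ.1.le
    · exact hPzint
    · filter_upwards [ae_restrict_mem measurableSet_Ioc] with ρ hρ
      calc 2 * Real.pi * (u z ^ p) * ρ = ρ * (2 * Real.pi * (u z ^ p)) := by ring
        _ ≤ ρ * ∫ φ in Ioo (-Real.pi) Real.pi,
              q1 (z + (ρ:ℂ) * Complex.exp ((φ:ℂ) * Complex.I)) :=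
            mul_le_mul_of_nonneg_left (stepA ρ hρ) hρ.1.le
  -- Step C : monotonicity to the big disc
  have hq1int : IntegrableOn q1 (closedBall (0:ℂ) (r+δ)) := by
    apply Measure.integrableOn_of_bounded measure_closedBall_lt_top.ne
      hq1m.aestronglyMeasurable (M := M ^ p)
    filter_upwards with w
    rw [Real.norm_eq_abs]
    exact hq1b w
  have stepC : ∫ w in closedBall z δ, q1 w ≤ ∫ w in closedBall (0:ℂ) (r+δ), q1 w := by
    apply setIntegral_mono_set hq1int
    · filter_upwards with w using hq10 w
    · apply HasSubset.Subset.eventuallyLE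
      apply closedBall_subset_closedBall'
      rw [Complex.dist_eq, sub_zero, habsz]
      linarith
  -- Step D : polar coordinates around 0 and the L^p bound
  obtain ⟨hP0, hP0int⟩ := polar_disc q1 hq1m (M ^ p) hq1b hrdpos (0:ℂ)
  set K : ℝ := (ε/8) ^ p * δ ^ (1 - 2*p) with hKdef
  have hK0 : 0 ≤ K := by
    rw [hKdef]
    positivity
  have stepD : ∫ w in closedBall (0:ℂ) (r+δ), q1 w ≤ K * (2*δ) := by
    rw [hP0]
    have hg_int : Integrable ((Icc (r-δ) (r+δ)).indicator (fun _ => K))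
        (volume.restrict (Ioc (0:ℝ) (r+δ))) := by
      haveI : IsFiniteMeasure (volume.restrict (Ioc (0:ℝ) (r+δ))) :=
        ⟨by rw [Measure.restrict_apply_univ]; exact measure_Ioc_lt_top⟩
      exact (integrable_const K).indicator measurableSet_Icc
    have hbound : ∀ s ∈ Ioc (0:ℝ) (r+δ),
        s * (∫ φ in Ioo (-Real.pi) Real.pi,
            q1 ((0:ℂ) + (s:ℂ) * Complex.exp ((φ:ℂ) * Complex.I)))
          ≤ (Icc (r-δ) (r+δ)).indicator (fun _ => K) s := by
      intro s hs
      have hs0 : 0 < s := hs.1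
      have habss : ∀ φ : ℝ, ‖(0:ℂ) + (s:ℂ) * Complex.exp ((φ:ℂ) * Complex.I)‖ = s := by
        intro φ
        rw [zero_add, norm_mul, Complex.norm_real, Real.norm_eq_abs, Complex.norm_exp_ofReal_mul_I, mul_one,
          abs_of_pos hs0]
      by_cases hcase : s ∈ Icc (r-δ) (r+δ)
      · rw [Set.indicator_of_mem hcase]
        have hs1 : s < 1 := lt_of_le_of_lt hs.2 hrd1
        have hsmem : ∀ φ : ℝ, (s:ℂ) * Complex.exp ((φ:ℂ) * Complex.I) ∈ ball (0:ℂ) 1 := by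
          intro φ
          rw [mem_ball_zero_iff]
          have := habss φ
          rw [zero_add] at this
          rw [this]
          exact hs1
        -- the Lp hypothesis at radius s
        have hsIoo : s ∈ Ioo a 1 := ⟨lt_of_le_of_lt (le_max_left a 0)
            (lt_of_lt_of_le hannlo hcase.1), hs1⟩
        have hLps := haP hsIoo
        simp only [mem_setOf_eq] at hLps
        -- identify the integral
        have hXeq : (∫ φ in (0:ℝ)..(2 * Real.pi),
              |u ((s : ℂ) * Complex.exp ((φ : ℂ) * Complex.I))| ^ p)
            = ∫ φ in Ioc (0:ℝ) (2*Real.pi),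
              q ((0:ℂ) + (s:ℂ) * Complex.exp ((φ:ℂ) * Complex.I)) := by
          rw [intervalIntegral.integral_of_le (by positivity : (0:ℝ) ≤ 2*Real.pi)]
          apply setIntegral_congr_fun measurableSet_Ioc
          intro x _
          show |u ((s:ℂ) * Complex.exp ((x:ℂ) * Complex.I))| ^ p
              = q ((0:ℂ) + (s:ℂ) * Complex.exp ((x:ℂ) * Complex.I))
          have hq' : q ((0:ℂ) + (s:ℂ) * Complex.exp ((x:ℂ) * Complex.I))
              = ub ((s:ℂ) * Complex.exp ((x:ℂ) * Complex.I)) ^ p := by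
            show ub ((0:ℂ) + (s:ℂ) * Complex.exp ((x:ℂ) * Complex.I)) ^ p = _
            rw [zero_add]
          rw [hq', hubu _ (hsmem x), abs_of_nonneg (hpos _ (hsmem x))]
        have hX0 : 0 ≤ ∫ φ in Ioc (0:ℝ) (2*Real.pi),
            q ((0:ℂ) + (s:ℂ) * Complex.exp ((φ:ℂ) * Complex.I)) :=
          setIntegral_nonneg measurableSet_Ioc fun x _ => hq0 _
        rw [hXeq] at hLps
        -- raise the Lp bound to the p-th power
        have hs1' : 0 < 1 - s := by linarith
        have hrhs0 : 0 ≤ ε/8 * (1-s) ^ (-2 + 1/p) := by positivity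
        have hXle : (∫ φ in Ioc (0:ℝ) (2*Real.pi),
              q ((0:ℂ) + (s:ℂ) * Complex.exp ((φ:ℂ) * Complex.I)))
            ≤ (ε/8) ^ p * (1-s) ^ (1 - 2*p) := by
          have h1 := Real.rpow_le_rpow (Real.rpow_nonneg hX0 _) hLps hppos.le
          rw [← Real.rpow_mul hX0, one_div_mul_cancel hp0, Real.rpow_one] at h1
          calc (∫ φ in Ioc (0:ℝ) (2*Real.pi),
                q ((0:ℂ) + (s:ℂ) * Complex.exp ((φ:ℂ) * Complex.I)))
              ≤ (ε/8 * (1-s) ^ (-2 + 1/p)) ^ p := h1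
            _ = (ε/8) ^ p * (1-s) ^ (1 - 2*p) := by
                rw [Real.mul_rpow hε8.le (Real.rpow_nonneg hs1'.le _),
                  ← Real.rpow_mul hs1'.le]
                congr 2
                field_simp
                ring
        have hδs : δ ≤ 1 - s := by
          have := hcase.2
          rw [hδdef] at *
          linarith
        have hpow : (1-s) ^ (1 - 2*p) ≤ δ ^ (1 - 2*p) :=
          Real.rpow_le_rpow_of_nonpos hδ hδs (by linarith)
        have hinnerK : (∫ φ in Ioo (-Real.pi) Real.pi,
            q1 ((0:ℂ) + (s:ℂ) * Complex.exp ((φ:ℂ) * Complex.I))) ≤ K := by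
          have hmono : (∫ φ in Ioo (-Real.pi) Real.pi,
              q1 ((0:ℂ) + (s:ℂ) * Complex.exp ((φ:ℂ) * Complex.I)))
              ≤ ∫ φ in Ioo (-Real.pi) Real.pi,
                q ((0:ℂ) + (s:ℂ) * Complex.exp ((φ:ℂ) * Complex.I)) := by
            apply integral_mono_of_nonneg
            · filter_upwards with x using hq10 _
            · haveI : IsFiniteMeasure (volume.restrict (Ioo (-Real.pi) Real.pi)) :=
                ⟨by rw [Measure.restrict_apply_univ]; exact measure_Ioo_lt_top⟩
              apply Integrable.mono' (integrable_const (M ^ p))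
              · apply Measurable.aestronglyMeasurable
                apply hq.comp
                have hcont : Continuous fun x : ℝ =>
                    (0:ℂ) + (s:ℂ) * Complex.exp ((x:ℂ) * Complex.I) :=
                  continuous_const.add (continuous_const.mul (Complex.continuous_exp.comp
                    (Complex.continuous_ofReal.mul continuous_const)))
                exact hcont.measurable
              · filter_upwards with x
                rw [Real.norm_eq_abs, abs_of_nonneg (hq0 _)]
                apply hqM
                rw [mem_closedBall_zero_iff, habss]
                exact hs.2
            · filter_upwards with x using hq1q _
          calc (∫ φ in Ioo (-Real.pi) Real.pi,
              q1 ((0:ℂ) + (s:ℂ) * Complex.exp ((φ:ℂ) * Complex.I))) ≤ _ := hmono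
            _ = ∫ φ in Ioc (0:ℝ) (2*Real.pi),
                q ((0:ℂ) + (s:ℂ) * Complex.exp ((φ:ℂ) * Complex.I)) := circle_int_shift q 0 s
            _ ≤ (ε/8) ^ p * (1-s) ^ (1 - 2*p) := hXle
            _ ≤ (ε/8) ^ p * δ ^ (1 - 2*p) := by
                apply mul_le_mul_of_nonneg_left hpow
                positivity
            _ = K := by rw [hKdef]
        have hinner0 : 0 ≤ ∫ φ in Ioo (-Real.pi) Real.pi,
            q1 ((0:ℂ) + (s:ℂ) * Complex.exp ((φ:ℂ) * Complex.I)) :=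
          setIntegral_nonneg measurableSet_Ioo fun x _ => hq10 _
        calc s * (∫ φ in Ioo (-Real.pi) Real.pi,
              q1 ((0:ℂ) + (s:ℂ) * Complex.exp ((φ:ℂ) * Complex.I)))
            ≤ 1 * K := mul_le_mul (by linarith) hinnerK hinner0 zero_le_one
          _ = K := one_mul K
      · -- s < r - δ : the inner integral vanishes
        rw [Set.indicator_of_notMem hcase]
        have hslt : s < r - δ := by
          rcases lt_or_ge s (r-δ) with h | h
          · exact h
          · exact absurd ⟨h, hs.2⟩ hcase
        have hzero : ∀ φ : ℝ, q1 ((0:ℂ) + (s:ℂ) * Complex.exp ((φ:ℂ) * Complex.I)) = 0 := by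
          intro φ
          rw [hq1def]
          apply Set.indicator_of_notMem
          rw [hA2def, mem_diff]
          push_neg
          intro hcon
          rw [mem_ball_zero_iff, habss]
          exact hslt
        have : (∫ φ in Ioo (-Real.pi) Real.pi,
            q1 ((0:ℂ) + (s:ℂ) * Complex.exp ((φ:ℂ) * Complex.I))) = 0 := by
          rw [show (fun φ : ℝ => q1 ((0:ℂ) + (s:ℂ) * Complex.exp ((φ:ℂ) * Complex.I)))
            = fun _ : ℝ => (0:ℝ) from funext hzero]
          simp
        rw [this, mul_zero]
    calc (∫ s in Ioc (0:ℝ) (r+δ), s * ∫ φ in Ioo (-Real.pi) Real.pi,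
          q1 ((0:ℂ) + (s:ℂ) * Complex.exp ((φ:ℂ) * Complex.I)))
        ≤ ∫ s in Ioc (0:ℝ) (r+δ), (Icc (r-δ) (r+δ)).indicator (fun _ => K) s := by
          apply integral_mono_of_nonneg
          · filter_upwards [ae_restrict_mem measurableSet_Ioc] with s hs
            exact mul_nonneg hs.1.le (setIntegral_nonneg measurableSet_Ioo fun x _ => hq10 _)
          · exact hg_int
          · filter_upwards [ae_restrict_mem measurableSet_Ioc] with s hs using hbound s hs
      _ = K * (2*δ) := by
          rw [setIntegral_indicator measurableSet_Icc]
          have hinter : Ioc (0:ℝ) (r+δ) ∩ Icc (r-δ) (r+δ) = Icc (r-δ) (r+δ) := by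
            apply inter_eq_self_of_subset_right
            intro x hx
            exact ⟨lt_of_lt_of_le hrd0 hx.1, hx.2⟩
          rw [hinter, setIntegral_const, smul_eq_mul, measureReal_def, Real.volume_Icc,
            ENNReal.toReal_ofReal (by linarith), mul_comm]
          congr 1
          ring
  -- combine everything
  have hmain : u z ^ p ≤ (2/Real.pi) * ((ε/8) ^ p * δ ^ (-(2*p))) := by
    have hchain : 2 * Real.pi * (u z ^ p) * (δ^2/2) ≤ K * (2*δ) :=
      le_trans stepB (le_trans stepC stepD)
    have hδpow : δ ^ (1 - 2*p) * (2*δ) = 2 * (δ ^ (-(2*p)) * δ^2) := by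
      have e1 : δ ^ (-(2*p)) = δ ^ (1 - 2*p) * δ⁻¹ := by
        rw [← Real.rpow_neg_one δ, ← Real.rpow_add hδ]
        congr 1
        ring
      rw [e1]
      field_simp
    rw [hKdef] at hchain
    have h2 : Real.pi * (u z ^ p) * δ^2 ≤ 2 * ((ε/8) ^ p * δ ^ (-(2*p)) * δ^2) := by
      calc Real.pi * (u z ^ p) * δ^2 = 2 * Real.pi * (u z ^ p) * (δ^2/2) := by ring
        _ ≤ (ε/8) ^ p * δ ^ (1 - 2*p) * (2*δ) := hchain
        _ = 2 * ((ε/8) ^ p * δ ^ (-(2*p)) * δ^2) := by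
            rw [mul_assoc, hδpow]
            ring
    have hδ2 : (0:ℝ) < δ^2 := by positivity
    have h3 : Real.pi * (u z ^ p) ≤ 2 * ((ε/8) ^ p * δ ^ (-(2*p))) := by
      have := (mul_le_mul_iff_of_pos_right hδ2).1 (by linarith [h2] : Real.pi * (u z ^ p) * δ^2
        ≤ 2 * ((ε/8) ^ p * δ ^ (-(2*p))) * δ^2)
      exact this
    rw [div_mul_eq_mul_div, le_div_iff₀ hπ]
    linarith [h3]
  -- extract the bound on u z
  have huzle : u z ≤ (2/Real.pi) ^ p⁻¹ * ((ε/8) * δ ^ (-(2:ℝ))) := by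
    have h1 : u z = (u z ^ p) ^ p⁻¹ := (Real.rpow_rpow_inv huz0 hp0).symm
    have h2 : (u z ^ p) ^ p⁻¹ ≤ ((2/Real.pi) * ((ε/8) ^ p * δ ^ (-(2*p)))) ^ p⁻¹ :=
      Real.rpow_le_rpow (Real.rpow_nonneg huz0 p) hmain (by positivity)
    have h3 : ((2/Real.pi) * ((ε/8) ^ p * δ ^ (-(2*p)))) ^ p⁻¹
        = (2/Real.pi) ^ p⁻¹ * ((ε/8) * δ ^ (-(2:ℝ))) := by
      have he : -(2*p) * p⁻¹ = -(2:ℝ) := by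
        rw [neg_mul, mul_assoc, mul_inv_cancel₀ hp0, mul_one]
      rw [Real.mul_rpow (by positivity) (by positivity),
        Real.mul_rpow (by positivity) (by positivity),
        Real.rpow_rpow_inv hε8.le hp0, ← Real.rpow_mul hδ.le, he]
    rw [h1]
    rw [h3] at h2
    exact h2
  have h2π : (2:ℝ)/Real.pi ≤ 1 := by
    rw [div_le_one hπ]
    linarith [Real.pi_gt_three]
  have h2πp : (2/Real.pi) ^ p⁻¹ ≤ 1 :=
    Real.rpow_le_one (by positivity) h2π (by positivity)
  have hδ2inv : δ ^ (-(2:ℝ)) = 4 * ((1-r)^2)⁻¹ := by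
    rw [Real.rpow_neg hδ.le, show ((2:ℝ)) = ((2:ℕ):ℝ) by norm_num, Real.rpow_natCast]
    rw [hδdef]
    rw [div_pow]
    rw [inv_div]
    ring
  have hfin : u z ≤ (ε/2) * ((1-r)^2)⁻¹ := by
    have h5 : (0:ℝ) ≤ (ε/8) * δ ^ (-(2:ℝ)) := by positivity
    calc u z ≤ (2/Real.pi) ^ p⁻¹ * ((ε/8) * δ ^ (-(2:ℝ))) := huzle
      _ ≤ 1 * ((ε/8) * δ ^ (-(2:ℝ))) := mul_le_mul_of_nonneg_right h2πp h5
      _ = (ε/8) * (4 * ((1-r)^2)⁻¹) := by rw [one_mul, hδ2inv]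
      _ = (ε/2) * ((1-r)^2)⁻¹ := by ring
  rw [abs_of_nonneg huz0]
  have hinv0 : (0:ℝ) ≤ ((1-r)^2)⁻¹ := by positivity
  calc u z ≤ (ε/2) * ((1-r)^2)⁻¹ := hfin
    _ ≤ ε * ((1-r)^2)⁻¹ := by
        apply mul_le_mul_of_nonneg_right _ hinv0
        linarith
end
end
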